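/- arXiv:2505.24602 — 3 statements merged into one kernel-verified Lean document; each statement's English description precedes it below -/
import Mathlib

section
/- For every y ∈ ℝ, a > 0 and t > τ, the integral over ξ ∈ (0,∞) of |∂_ξ g(y,ξ,a(t−τ))|, where g(y,ξ,s) = Φ(y−ξ,s) + Φ(y+ξ,s) and Φ(z,s) = (4πs)^{-1/2} exp(−z²/(4s)), is at most 1/√(π a (t−τ)). -/
open MeasureTheory Real Set

/-- The 1D heat kernel `Φ(z,s) = (4πs)^{-1/2} exp(−z²/(4s))`. -/
noncomputable def Phi (z s : ℝ) : ℝ := (1 / Real.sqrt (4 * π * s)) * Real.exp (-z ^ 2 / (4 * s))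

/-- The Neumann-type kernel `g(y,ξ,s) = Φ(y−ξ,s) + Φ(y+ξ,s)`. -/
noncomputable def gker (y ξ s : ℝ) : ℝ := Phi (y - ξ) s + Phi (y + ξ) s

lemma key_int {s : ℝ} (hs : 0 < s) :
    ∫ x in Ioi (0:ℝ), x * Real.exp (-x ^ 2 / (4 * s)) = 2 * s := by
  have h4s : (0:ℝ) < 4 * s := by linarith
  have hder : ∀ x ∈ Ioi (0:ℝ), HasDerivAt (fun x : ℝ => -(2 * s) * Real.exp (-x ^ 2 / (4 * s)))
      (x * Real.exp (-x ^ 2 / (4 * s))) x := by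
    intro x _
    have h1 : HasDerivAt (fun x : ℝ => -x ^ 2 / (4 * s)) (-(2 * x) / (4 * s)) x := by
      simpa using (((hasDerivAt_id x).pow 2).neg.div_const (4 * s))
    have := (h1.exp.const_mul (-(2 * s)))
    refine this.congr_deriv ?_
    field_simp
    ring
  have hint : IntegrableOn (fun x : ℝ => x * Real.exp (-x ^ 2 / (4 * s))) (Ioi 0) := by
    have hb : (0:ℝ) < 1 / (4 * s) := by positivity
    have := (integrable_mul_exp_neg_mul_sq hb).integrableOn (s := Ioi (0:ℝ))
    refine this.congr_fun (fun x _ => ?_) measurableSet_Ioi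
    congr 1
    field_simp
  have htend : Filter.Tendsto (fun x : ℝ => -(2 * s) * Real.exp (-x ^ 2 / (4 * s)))
      Filter.atTop (nhds 0) := by
    have : Filter.Tendsto (fun x : ℝ => -x ^ 2 / (4 * s)) Filter.atTop Filter.atBot := by
      apply Filter.Tendsto.atBot_div_const h4s
      simpa using (tendsto_pow_atTop (two_ne_zero)).neg
    simpa using (Real.tendsto_exp_atBot.comp this).const_mul (-(2 * s))
  have hcont : ContinuousWithinAt (fun x : ℝ => -(2 * s) * Real.exp (-x ^ 2 / (4 * s)))
      (Ici 0) 0 := (Continuous.continuousWithinAt (by fun_prop))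
  have := integral_Ioi_of_hasDerivAt_of_tendsto hcont hder hint htend
  rw [this]; simp

lemma h_integrable {s : ℝ} (hs : 0 < s) :
    Integrable (fun z : ℝ => |z| / (2 * s) * Real.exp (-z ^ 2 / (4 * s))) := by
  have hb : (0:ℝ) < 1 / (4 * s) := by positivity
  have h0 := ((integrable_mul_exp_neg_mul_sq hb).abs.const_mul (1 / (2 * s)))
  refine h0.congr (Filter.Eventually.of_forall fun x => ?_)
  simp only [abs_mul, abs_of_pos (Real.exp_pos _),
    show -(1 / (4 * s)) * x ^ 2 = -x ^ 2 / (4 * s) by ring]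
  ring

lemma h_integral {s : ℝ} (hs : 0 < s) :
    ∫ z : ℝ, |z| / (2 * s) * Real.exp (-z ^ 2 / (4 * s)) = 2 := by
  have heq : (fun z : ℝ => |z| / (2 * s) * Real.exp (-z ^ 2 / (4 * s)))
      = fun z : ℝ => |z| / (2 * s) * Real.exp (-|z| ^ 2 / (4 * s)) := by
    funext z; rw [sq_abs]
  rw [heq]
  rw [integral_comp_abs (f := fun u : ℝ => u / (2 * s) * Real.exp (-u ^ 2 / (4 * s)))]
  have : ∫ x in Ioi (0:ℝ), x / (2 * s) * Real.exp (-x ^ 2 / (4 * s))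
      = (1 / (2 * s)) * ∫ x in Ioi (0:ℝ), x * Real.exp (-x ^ 2 / (4 * s)) := by
    rw [← integral_const_mul]; congr 1; funext x; ring
  rw [this, key_int hs]
  field_simp

lemma gker_hasDerivAt (y s ξ : ℝ) :
    HasDerivAt (fun ξ' => gker y ξ' s)
      ((1 / Real.sqrt (4 * π * s)) *
        ((y - ξ) / (2 * s) * Real.exp (-(y - ξ) ^ 2 / (4 * s))
          - (y + ξ) / (2 * s) * Real.exp (-(y + ξ) ^ 2 / (4 * s)))) ξ := by
  have h1 : HasDerivAt (fun ξ' : ℝ => -(y - ξ') ^ 2 / (4 * s))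
      (-(2 * (y - ξ) ^ 1 * -1) / (4 * s)) ξ :=
    (((hasDerivAt_id ξ).const_sub y).pow 2).neg.div_const (4 * s)
  have h2 : HasDerivAt (fun ξ' : ℝ => -(y + ξ') ^ 2 / (4 * s))
      (-(2 * (y + ξ) ^ 1 * 1) / (4 * s)) ξ :=
    (((hasDerivAt_id ξ).const_add y).pow 2).neg.div_const (4 * s)
  have H := (h1.exp.const_mul (1 / Real.sqrt (4 * π * s))).add
    (h2.exp.const_mul (1 / Real.sqrt (4 * π * s)))
  simp only [gker, Phi]
  refine H.congr_deriv ?_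
  by_cases hs : s = 0
  · simp [hs]
  · field_simp
    ring

theorem stmt0 (y a t τ : ℝ) (ha : 0 < a) (htτ : τ < t) :
    (∫ ξ in Set.Ioi (0 : ℝ), |deriv (fun ξ' => gker y ξ' (a * (t - τ))) ξ|)
      ≤ 1 / Real.sqrt (π * a * (t - τ)) := by
  set s : ℝ := a * (t - τ) with hs_def
  have hs : 0 < s := mul_pos ha (by linarith)
  set c : ℝ := 1 / Real.sqrt (4 * π * s) with hc_def
  have hc0 : 0 ≤ c := by positivity
  set h : ℝ → ℝ := fun z => |z| / (2 * s) * Real.exp (-z ^ 2 / (4 * s)) with hh_def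
  set k : ℝ → ℝ := fun ξ => h (y - ξ) + h (y + ξ) with hk_def
  have hhint : Integrable h := h_integrable hs
  have hf1 : Integrable (fun ξ : ℝ => h (y - ξ)) := hhint.comp_sub_left y
  have hf2 : Integrable (fun ξ : ℝ => h (y + ξ)) := hhint.comp_add_left y
  have hkint : Integrable k := hf1.add hf2
  -- pointwise bound
  have hbound : ∀ ξ : ℝ, |deriv (fun ξ' => gker y ξ' s) ξ| ≤ c * k ξ := by
    intro ξ
    rw [(gker_hasDerivAt y s ξ).deriv]
    rw [abs_mul, abs_of_nonneg hc0]
    refine mul_le_mul_of_nonneg_left ?_ hc0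
    refine (abs_sub _ _).trans (le_of_eq ?_)
    simp only [hk_def, hh_def, abs_mul, abs_div, abs_of_pos (Real.exp_pos _),
      abs_of_pos (show (0:ℝ) < 2 * s by linarith)]
  -- integral bound
  have hBint : IntegrableOn (fun ξ : ℝ => c * k ξ) (Ioi 0) :=
    (hkint.const_mul c).integrableOn
  have step1 : (∫ ξ in Set.Ioi (0 : ℝ), |deriv (fun ξ' => gker y ξ' s) ξ|)
      ≤ ∫ ξ in Set.Ioi (0 : ℝ), c * k ξ :=
    integral_mono_of_nonneg (Filter.Eventually.of_forall fun ξ => abs_nonneg _)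
      hBint (Filter.Eventually.of_forall fun ξ => hbound ξ)
  -- compute the bound integral
  have keven : ∀ ξ : ℝ, k (-ξ) = k ξ := by
    intro ξ
    simp only [hk_def, sub_neg_eq_add, ← sub_eq_add_neg]
    exact add_comm _ _
  have e1 : (∫ ξ in Ioi (0:ℝ), k ξ) = ∫ ξ in Iic (0:ℝ), k ξ := by
    have := integral_comp_neg_Ioi (0:ℝ) k
    simp only [keven, neg_zero] at this
    exact this
  have e2 : (∫ ξ in Iic (0:ℝ), k ξ) + (∫ ξ in Ioi (0:ℝ), k ξ) = ∫ ξ : ℝ, k ξ :=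
    intervalIntegral.integral_Iic_add_Ioi hkint.integrableOn hkint.integrableOn
  have e3 : (∫ ξ : ℝ, k ξ) = 4 := by
    rw [hk_def]
    rw [integral_add hf1 hf2]
    rw [integral_sub_left_eq_self h volume y, integral_add_left_eq_self h y]
    rw [hh_def, h_integral hs]
    norm_num
  have e4 : (∫ ξ in Ioi (0:ℝ), k ξ) = 2 := by
    rw [e1] at e2 ⊢
    linarith [e2, e3]
  have e5 : (∫ ξ in Set.Ioi (0 : ℝ), c * k ξ) = c * 2 := by
    rw [integral_const_mul, e4]
  -- final computation
  have hfin : c * 2 = 1 / Real.sqrt (π * a * (t - τ)) := by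
    have h4 : Real.sqrt (4 * π * s) = 2 * Real.sqrt (π * s) := by
      rw [show 4 * π * s = 4 * (π * s) by ring,
        Real.sqrt_mul (by norm_num : (0:ℝ) ≤ 4),
        show (4:ℝ) = 2 ^ 2 by norm_num, Real.sqrt_sq (by norm_num : (0:ℝ) ≤ 2)]
    have hps : (0:ℝ) < Real.sqrt (π * s) := Real.sqrt_pos.mpr (by positivity)
    rw [hc_def, h4, show π * a * (t - τ) = π * s by rw [hs_def]; ring]
    field_simp
  calc (∫ ξ in Set.Ioi (0 : ℝ), |deriv (fun ξ' => gker y ξ' s) ξ|)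
      ≤ ∫ ξ in Set.Ioi (0 : ℝ), c * k ξ := step1
    _ = c * 2 := e5
    _ = 1 / Real.sqrt (π * a * (t - τ)) := hfin
end

section
/- Let φ : ℝ → ℝ be Lipschitz with constant ‖φ'‖_∞ and let ε > 0. Then for all t ≥ ε and y ∈ ℝ, |∂_y² ∫_ℝ φ(ξ)Φ(y−ξ,t) dξ| ≤ √2 ‖φ'‖_∞ / √ε, where Φ is the 1D heat kernel. -/
open MeasureTheory Real Set

lemma integrable_quad_gauss (b c0 c1 c2 : ℝ) (hb : 0 < b) :
    Integrable (fun z : ℝ => (c0 + c1 * |z| + c2 * z ^ 2) * Real.exp (-b * z ^ 2)) := by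
  have h0 : Integrable (fun z : ℝ => c0 * Real.exp (-b * z ^ 2)) :=
    (integrable_exp_neg_mul_sq hb).const_mul _
  have h1 : Integrable (fun z : ℝ => c1 * (|z| * Real.exp (-b * z ^ 2))) := by
    have := (integrable_mul_exp_neg_mul_sq hb).abs
    refine (this.congr ?_).const_mul _
    exact Filter.Eventually.of_forall fun z => by
      simp [abs_mul, Real.abs_exp]
  have h2 : Integrable (fun z : ℝ => c2 * (z ^ 2 * Real.exp (-b * z ^ 2))) := by
    have := integrable_rpow_mul_exp_neg_mul_sq hb (by norm_num : (-1:ℝ) < 2)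
    refine (this.congr ?_).const_mul _
    exact Filter.Eventually.of_forall fun z => by
      norm_num [show ((2:ℝ)) = ((2:ℕ):ℝ) by norm_num, Real.rpow_natCast]
  exact ((h0.add h1).add h2).congr
    (Filter.Eventually.of_forall fun z => by simp [Pi.add_apply]; ring)

lemma integral_abs_mul_exp_neg_mul_sq {b : ℝ} (hb : 0 < b) :
    ∫ z : ℝ, |z| * Real.exp (-b * z ^ 2) = 1 / b := by
  have key : ∫ z in Ioi (0:ℝ), z * Real.exp (-b * z ^ 2) = 1 / (2 * b) := by
    have hd : ∀ x ∈ Ici (0:ℝ), HasDerivAt (fun x : ℝ => -(1/(2*b)) * Real.exp (-b * x ^ 2))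
        (x * Real.exp (-b * x ^ 2)) x := by
      intro x _
      have h1 : HasDerivAt (fun x : ℝ => -b * x ^ 2) (-b * (2 * x)) x := by
        simpa using ((hasDerivAt_pow 2 x).const_mul (-b))
      have := (h1.exp).const_mul (-(1/(2*b)))
      refine this.congr_deriv ?_
      field_simp
    have htend : Filter.Tendsto (fun x : ℝ => -(1/(2*b)) * Real.exp (-b * x ^ 2))
        Filter.atTop (nhds 0) := by
      have h1 : Filter.Tendsto (fun x : ℝ => -b * x ^ 2) Filter.atTop Filter.atBot := by
        apply Filter.Tendsto.const_mul_atTop_of_neg (by linarith : -b < 0)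
        exact Filter.tendsto_pow_atTop (by norm_num)
      have := (Real.tendsto_exp_atBot.comp h1).const_mul (-(1/(2*b)))
      simpa using this
    have := integral_Ioi_of_hasDerivAt_of_tendsto' hd
      (integrable_mul_exp_neg_mul_sq hb).integrableOn htend
    rw [this]; simp
  have h := integral_comp_abs (f := fun z : ℝ => z * Real.exp (-b * z ^ 2))
  simp only [sq_abs] at h
  rw [h, key]
  field_simp

theorem stmt12 (φ : ℝ → ℝ) (L ε : ℝ) (hε : 0 < ε)
    (hφ : ∀ x y : ℝ, |φ x - φ y| ≤ L * |x - y|) :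
    ∀ t y : ℝ, ε ≤ t →
      |deriv (deriv (fun y' => ∫ ξ : ℝ, φ ξ * Phi (y' - ξ) t)) y|
        ≤ Real.sqrt 2 * L / Real.sqrt ε := by
  intro t y hεt
  have ht : 0 < t := lt_of_lt_of_le hε hεt
  have hL : 0 ≤ L := by
    have h := hφ 1 0
    simp only [sub_zero, abs_one, mul_one] at h
    exact le_trans (abs_nonneg _) h
  have hπ : 0 < π := pi_pos
  set c : ℝ := 1 / Real.sqrt (4 * π * t) with hc_def
  have hc : 0 < c := by positivity
  set k : ℝ → ℝ := fun z => -(z / (2 * t)) * Phi z t with hk_def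
  have hPhi_eq : ∀ z : ℝ, Phi z t = c * Real.exp (-z ^ 2 / (4 * t)) := fun z => rfl
  have hPhi_pos : ∀ z : ℝ, 0 < Phi z t := fun z => by rw [hPhi_eq]; positivity
  have hφcont : Continuous φ := by
    have : LipschitzWith (Real.toNNReal L) φ := by
      apply LipschitzWith.of_dist_le_mul
      intro a b
      rw [Real.dist_eq, Real.dist_eq, Real.coe_toNNReal L hL]
      exact hφ a b
    exact this.continuous
  have hPhicont : Continuous (fun z : ℝ => Phi z t) := by
    simp only [hPhi_eq]
    fun_prop
  have hkcont : Continuous k := by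
    rw [hk_def]
    fun_prop
  have hgrow : ∀ x ξ : ℝ, |φ ξ| ≤ (|φ 0| + L * |x|) + L * |ξ - x| := by
    intro x ξ
    have h1 : |φ ξ| ≤ |φ ξ - φ 0| + |φ 0| := by
      calc |φ ξ| = |(φ ξ - φ 0) + φ 0| := by ring_nf
        _ ≤ |φ ξ - φ 0| + |φ 0| := abs_add_le _ _
    have h2 : |φ ξ - φ 0| ≤ L * |ξ| := by simpa using hφ ξ 0
    have h3 : |ξ| ≤ |x| + |ξ - x| := by
      calc |ξ| = |x + (ξ - x)| := by ring_nf
        _ ≤ |x| + |ξ - x| := abs_add_le _ _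
    nlinarith [abs_nonneg (ξ - x)]
  have hkabs : ∀ z : ℝ, |k z| = |z| / (2 * t) * Phi z t := by
    intro z
    rw [hk_def]
    simp only []
    rw [abs_mul, abs_of_pos (hPhi_pos z), abs_neg, abs_div,
      abs_of_pos (by positivity : (0:ℝ) < 2 * t)]
  -- derivative of the kernel
  have hderivPhi : ∀ ξ x : ℝ, HasDerivAt (fun w => Phi (w - ξ) t) (k (x - ξ)) x := by
    intro ξ x
    simp only [hPhi_eq, hk_def]
    have h1 : HasDerivAt (fun w : ℝ => w - ξ) 1 x := (hasDerivAt_id x).sub_const ξ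
    have h2 := ((h1.pow 2).neg).div_const (4 * t)
    have h3 := (h2.exp).const_mul c
    refine h3.congr_deriv ?_
    push_cast
    simp only [Pi.neg_apply, Pi.pow_apply]
    ring
  -- integrability of the integrand
  have hFint : ∀ x : ℝ, Integrable (fun ξ => φ ξ * Phi (x - ξ) t) := by
    intro x
    set M : ℝ := |φ 0| + L * |x| with hM_def
    have hM : 0 ≤ M := by positivity
    refine Integrable.mono'
      ((integrable_quad_gauss (1/(4*t)) (c*M) (c*L) 0 (by positivity)).comp_sub_right x)
      ?_ ?_
    · exact (hφcont.mul (hPhicont.comp (continuous_const.sub continuous_id))).aestronglyMeasurable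
    · refine Filter.Eventually.of_forall fun ξ => ?_
      have hb1 : |φ ξ| ≤ M + L * |ξ - x| := hgrow x ξ
      calc ‖φ ξ * Phi (x - ξ) t‖
          = |φ ξ| * (c * Real.exp (-(1/(4*t)) * (ξ - x) ^ 2)) := by
            rw [Real.norm_eq_abs, abs_mul, abs_of_pos (hPhi_pos _), hPhi_eq,
              show -(x - ξ) ^ 2 / (4 * t) = -(1/(4*t)) * (ξ - x) ^ 2 from by ring]
        _ ≤ (M + L * |ξ - x|) * (c * Real.exp (-(1/(4*t)) * (ξ - x) ^ 2)) := by
            gcongr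
        _ = (c*M + c*L * |ξ - x| + 0 * (ξ - x) ^ 2) * Real.exp (-(1/(4*t)) * (ξ - x) ^ 2) := by
            ring
  -- differentiation under the integral sign
  have hFderiv : ∀ x : ℝ, HasDerivAt (fun y' => ∫ ξ : ℝ, φ ξ * Phi (y' - ξ) t)
      (∫ ξ : ℝ, φ ξ * k (x - ξ)) x := by
    intro x
    set M : ℝ := |φ 0| + L * |x| with hM_def
    have hM : 0 ≤ M := by positivity
    set C1 : ℝ := 1/(2*t) * (c * Real.exp (1/(4*t))) with hC1_def
    have hC1 : 0 < C1 := by positivity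
    have key := hasDerivAt_integral_of_dominated_loc_of_deriv_le (𝕜 := ℝ)
      (F := fun y' ξ => φ ξ * Phi (y' - ξ) t)
      (F' := fun y' ξ => φ ξ * k (y' - ξ))
      (x₀ := x)
      (bound := fun ξ => (C1*M + C1*(M+L) * |ξ - x| + C1*L * (ξ - x) ^ 2)
        * Real.exp (-(1/(8*t)) * (ξ - x) ^ 2))
      (Metric.ball_mem_nhds x one_pos)
      ?_ (hFint x) ?_ ?_ ?_ ?_
    · exact key.2
    · exact Filter.Eventually.of_forall fun y' =>
        (hφcont.mul (hPhicont.comp (continuous_const.sub continuous_id))).aestronglyMeasurable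
    · exact (hφcont.mul (hkcont.comp (continuous_const.sub continuous_id))).aestronglyMeasurable
    · refine Filter.Eventually.of_forall fun ξ => fun w hw => ?_
      have hd : |w - x| < 1 := by simpa [Real.dist_eq] using mem_ball_iff_norm.mp hw
      have hd2 : (w - x) ^ 2 ≤ 1 := by nlinarith [sq_abs (w - x), abs_nonneg (w - x)]
      have hb1 : |φ ξ| ≤ M + L * |ξ - x| := hgrow x ξ
      have hb2 : |w - ξ| ≤ 1 + |ξ - x| := by
        calc |w - ξ| = |(w - x) + (x - ξ)| := by ring_nf
          _ ≤ |w - x| + |x - ξ| := abs_add_le _ _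
          _ ≤ 1 + |ξ - x| := by rw [abs_sub_comm x ξ]; linarith
      have hb3 : Real.exp (-(w - ξ) ^ 2 / (4 * t))
          ≤ Real.exp (1/(4*t)) * Real.exp (-(1/(8*t)) * (ξ - x) ^ 2) := by
        rw [← Real.exp_add]
        apply Real.exp_le_exp.mpr
        have h4 : (ξ - x) ^ 2 / 2 - 1 ≤ (w - ξ) ^ 2 := by
          nlinarith [sq_nonneg ((w - x) - (ξ - x) / 2)]
        have h6 : 1/(4*t) + -(1/(8*t)) * (ξ - x) ^ 2 - (-(w - ξ) ^ 2 / (4 * t))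
            = ((w - ξ) ^ 2 - ((ξ - x) ^ 2 / 2 - 1)) / (4 * t) := by
          field_simp
          ring
        have h7 : (0:ℝ) ≤ ((w - ξ) ^ 2 - ((ξ - x) ^ 2 / 2 - 1)) / (4 * t) :=
          div_nonneg (by linarith) (by positivity)
        linarith
      calc ‖φ ξ * k (w - ξ)‖
          = |φ ξ| * (|w - ξ| / (2 * t) * (c * Real.exp (-(w - ξ) ^ 2 / (4 * t)))) := by
            rw [Real.norm_eq_abs, abs_mul, hkabs, hPhi_eq]
        _ ≤ (M + L * |ξ - x|) * ((1 + |ξ - x|) / (2 * t)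
              * (c * (Real.exp (1/(4*t)) * Real.exp (-(1/(8*t)) * (ξ - x) ^ 2)))) := by
            gcongr
        _ = (C1*M + C1*(M+L) * |ξ - x| + C1*L * (ξ - x) ^ 2)
              * Real.exp (-(1/(8*t)) * (ξ - x) ^ 2) := by
            rw [hC1_def, ← sq_abs (ξ - x)]
            ring
    · exact ((integrable_quad_gauss (1/(8*t)) (C1*M) (C1*(M+L)) (C1*L)
        (by positivity)).comp_sub_right x)
    · exact Filter.Eventually.of_forall fun ξ => fun w _ =>
        (hderivPhi ξ w).const_mul (φ ξ)
  -- change of variables in the derivative formula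
  have hswap : ∀ x : ℝ, (∫ ξ : ℝ, φ ξ * k (x - ξ)) = ∫ z : ℝ, φ (x - z) * k z := by
    intro x
    rw [← integral_sub_left_eq_self (fun z => φ (x - z) * k z) volume x]
    congr 1
    funext ξ
    rw [sub_sub_cancel]
  set G : ℝ → ℝ := fun x => ∫ z : ℝ, φ (x - z) * k z with hG_def
  have hderivF : deriv (fun y' => ∫ ξ : ℝ, φ ξ * Phi (y' - ξ) t) = G := by
    funext x
    rw [(hFderiv x).deriv, hswap x]
  -- integrability of the convolution integrand
  have hGint : ∀ x : ℝ, Integrable (fun z => φ (x - z) * k z) := by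
    intro x
    set M : ℝ := |φ 0| + L * |x| with hM_def
    have hM : 0 ≤ M := by positivity
    refine Integrable.mono'
      (integrable_quad_gauss (1/(4*t)) 0 (c/(2*t)*M) (c/(2*t)*L) (by positivity))
      ?_ ?_
    · exact ((hφcont.comp (continuous_const.sub continuous_id)).mul hkcont).aestronglyMeasurable
    · refine Filter.Eventually.of_forall fun z => ?_
      have hb1 : |φ (x - z)| ≤ M + L * |z| := by
        have := hgrow x (x - z)
        simpa using this
      calc ‖φ (x - z) * k z‖
          = |φ (x - z)| * (|z| / (2 * t) * (c * Real.exp (-(1/(4*t)) * z ^ 2))) := by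
            rw [Real.norm_eq_abs, abs_mul, hkabs, hPhi_eq,
              show -z ^ 2 / (4 * t) = -(1/(4*t)) * z ^ 2 from by ring]
        _ ≤ (M + L * |z|) * (|z| / (2 * t) * (c * Real.exp (-(1/(4*t)) * z ^ 2))) := by
            gcongr
        _ = (0 + c/(2*t)*M * |z| + c/(2*t)*L * z ^ 2) * Real.exp (-(1/(4*t)) * z ^ 2) := by
            rw [← sq_abs z]
            ring
  have hkint : Integrable k := by
    have := (integrable_mul_exp_neg_mul_sq (b := 1/(4*t)) (by positivity)).const_mul (-(c/(2*t)))
    refine this.congr (Filter.Eventually.of_forall fun z => ?_)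
    simp only [hk_def]
    rw [hPhi_eq, show -z ^ 2 / (4 * t) = -(1/(4*t)) * z ^ 2 from by ring]
    ring
  have hintk : ∫ z : ℝ, |k z| = 2 * c := by
    have habs : ∀ z : ℝ, |k z| = (c/(2*t)) * (|z| * Real.exp (-(1/(4*t)) * z ^ 2)) := by
      intro z
      rw [hkabs, hPhi_eq, show -z ^ 2 / (4 * t) = -(1/(4*t)) * z ^ 2 from by ring]
      ring
    simp only [habs]
    rw [integral_const_mul, integral_abs_mul_exp_neg_mul_sq (by positivity)]
    field_simp
    ring
  -- the constant bound
  have hconst : L * (2 * c) ≤ Real.sqrt 2 * L / Real.sqrt ε := by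
    have h2 : 2 * c ≤ Real.sqrt 2 / Real.sqrt ε := by
      rw [hc_def]
      rw [show 2 * (1 / Real.sqrt (4 * π * t)) = 2 / Real.sqrt (4 * π * t) from by ring]
      rw [div_le_div_iff₀ (Real.sqrt_pos.mpr (by positivity)) (Real.sqrt_pos.mpr hε)]
      have e1 : 2 * Real.sqrt ε = Real.sqrt (4 * ε) := by
        rw [show (4:ℝ) * ε = 2 ^ 2 * ε from by ring, Real.sqrt_mul (by positivity),
          Real.sqrt_sq (by norm_num)]
      have e2 : Real.sqrt 2 * Real.sqrt (4 * π * t) = Real.sqrt (2 * (4 * π * t)) :=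
        (Real.sqrt_mul (by norm_num) _).symm
      rw [e1, e2]
      apply Real.sqrt_le_sqrt
      nlinarith [pi_gt_three]
    calc L * (2 * c) ≤ L * (Real.sqrt 2 / Real.sqrt ε) := by gcongr
      _ = Real.sqrt 2 * L / Real.sqrt ε := by ring
  -- G is Lipschitz
  have hlip : LipschitzWith ⟨Real.sqrt 2 * L / Real.sqrt ε, by positivity⟩ G := by
    apply LipschitzWith.of_dist_le_mul
    intro x1 x2
    rw [Real.dist_eq, Real.dist_eq]
    change |G x1 - G x2| ≤ Real.sqrt 2 * L / Real.sqrt ε * |x1 - x2|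
    have hsub : G x1 - G x2 = ∫ z : ℝ, (φ (x1 - z) - φ (x2 - z)) * k z := by
      simp only [hG_def]
      rw [← integral_sub (hGint x1) (hGint x2)]
      congr 1
      funext z
      ring
    rw [hsub]
    calc |∫ z : ℝ, (φ (x1 - z) - φ (x2 - z)) * k z|
        ≤ ∫ z : ℝ, |φ (x1 - z) - φ (x2 - z)| * |k z| := by
          simpa [Real.norm_eq_abs, abs_mul] using
            norm_integral_le_integral_norm (fun z : ℝ => (φ (x1 - z) - φ (x2 - z)) * k z)
      _ ≤ ∫ z : ℝ, (L * |x1 - x2|) * |k z| := by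
          apply integral_mono_of_nonneg
            (Filter.Eventually.of_forall fun z => mul_nonneg (abs_nonneg _) (abs_nonneg _))
            (hkint.abs.const_mul _)
          refine Filter.Eventually.of_forall fun z => ?_
          show |φ (x1 - z) - φ (x2 - z)| * |k z| ≤ L * |x1 - x2| * |k z|
          apply mul_le_mul_of_nonneg_right _ (abs_nonneg _)
          calc |φ (x1 - z) - φ (x2 - z)| ≤ L * |(x1 - z) - (x2 - z)| := hφ _ _
            _ = L * |x1 - x2| := by ring_nf
      _ = L * |x1 - x2| * (2 * c) := by rw [integral_const_mul, hintk]
      _ ≤ Real.sqrt 2 * L / Real.sqrt ε * |x1 - x2| := by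
          nlinarith [mul_le_mul_of_nonneg_right hconst (abs_nonneg (x1 - x2))]
  rw [hderivF]
  have := norm_deriv_le_of_lipschitz (𝕜 := ℝ) (x₀ := y) hlip
  rw [Real.norm_eq_abs] at this
  exact this
end

section
/- Let f : [0,t*]×[0,∞) → ℝ be continuous and bounded, and let β ∈ (0,1). Then the spatial derivative ∂_y of w(t,y) = ∫₀^t ∫₀^∞ f(τ,ξ)G(y,ξ,t−τ) dξ dτ is β-Hölder in y, with seminorm bounded by C(β,t*)‖f‖_∞/(1−β), where G is the half-line Dirichlet heat Green's function. -/
open MeasureTheory Real Set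

/-- The half-line Dirichlet Green's function `G(y,ξ,s) = Φ(y−ξ,s) − Φ(y+ξ,s)`. -/
noncomputable def Gker (y ξ s : ℝ) : ℝ := Phi (y - ξ) s - Phi (y + ξ) s


noncomputable def dPhi (z s : ℝ) : ℝ := -(z / (2 * s)) * Phi z s

noncomputable def d2Phi (z s : ℝ) : ℝ := (z ^ 2 / (4 * s ^ 2) - 1 / (2 * s)) * Phi z s

lemma Phi_nonneg (z s : ℝ) : 0 ≤ Phi z s := by unfold Phi; positivity

lemma hasDerivAt_Phi {s : ℝ} (hs : 0 < s) (z : ℝ) :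
    HasDerivAt (fun z => Phi z s) (dPhi z s) z := by
  have h1 : HasDerivAt (fun z : ℝ => -z ^ 2 / (4 * s)) (-(2 * z) / (4 * s)) z := by
    simpa using ((hasDerivAt_pow 2 z).neg.div_const (4 * s))
  have h2 := (h1.exp).const_mul (1 / Real.sqrt (4 * π * s))
  refine h2.congr_deriv ?_
  unfold dPhi Phi; ring

lemma hasDerivAt_dPhi {s : ℝ} (hs : 0 < s) (z : ℝ) :
    HasDerivAt (fun z => dPhi z s) (d2Phi z s) z := by
  have h1 : HasDerivAt (fun z : ℝ => -(z / (2 * s))) (-(1 / (2 * s))) z := by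
    exact ((hasDerivAt_id z).div_const (2 * s)).neg
  have h2 := h1.mul (hasDerivAt_Phi hs z)
  refine h2.congr_deriv ?_
  unfold d2Phi dPhi Phi
  field_simp
  ring

lemma sqrt_4pis_ge {s : ℝ} (hs : 0 < s) : 2 * Real.sqrt s ≤ Real.sqrt (4 * π * s) := by
  have h1 : Real.sqrt (4 * π * s) = Real.sqrt (4 * π) * Real.sqrt s := by
    rw [← Real.sqrt_mul (by positivity)]
  have h2 : (2 : ℝ) ≤ Real.sqrt (4 * π) := by
    rw [show (2:ℝ) = Real.sqrt 4 by rw [show (4:ℝ) = 2^2 by norm_num, Real.sqrt_sq (by norm_num : (0:ℝ) ≤ 2)]]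
    exact Real.sqrt_le_sqrt (by nlinarith [Real.pi_gt_three])
  rw [h1]
  have := Real.sqrt_nonneg s
  nlinarith

lemma exp_quarter_eq {s z : ℝ} :
    Real.exp (-z ^ 2 / (4 * s)) = Real.exp (-z ^ 2 / (8 * s)) * Real.exp (-z ^ 2 / (8 * s)) := by
  rw [← Real.exp_add]
  congr 1
  by_cases h : s = 0
  · simp [h]
  · field_simp
    ring

lemma abs_dPhi_le {s : ℝ} (hs : 0 < s) (z : ℝ) :
    |dPhi z s| ≤ s⁻¹ * Real.exp (-z ^ 2 / (8 * s)) := by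
  have hsq : (0:ℝ) < Real.sqrt s := Real.sqrt_pos.2 hs
  have hss : Real.sqrt s ^ 2 = s := Real.sq_sqrt hs.le
  have hE : (0:ℝ) < Real.exp (-z ^ 2 / (8 * s)) := Real.exp_pos _
  set E := Real.exp (-z ^ 2 / (8 * s)) with hEdef
  have hA : (0:ℝ) < Real.sqrt (4 * π * s) := Real.sqrt_pos.2 (by positivity)
  set A := Real.sqrt (4 * π * s) with hAdef
  have hA2 : 2 * Real.sqrt s ≤ A := sqrt_4pis_ge hs
  have key : |z| * E ≤ 2 * Real.sqrt s := by
    have h1 : z ^ 2 / (8 * s) + 1 ≤ Real.exp (z ^ 2 / (8 * s)) := Real.add_one_le_exp _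
    have h2 : E = (Real.exp (z ^ 2 / (8 * s)))⁻¹ := by
      rw [hEdef, ← Real.exp_neg]; ring_nf
    rw [h2, mul_inv_le_iff₀' (Real.exp_pos _)]
    have h3' : 4 * Real.sqrt s * |z| ≤ z ^ 2 + 8 * s := by
      nlinarith [sq_nonneg (|z| - 2 * Real.sqrt s), sq_abs z, abs_nonneg z]
    have h3 : |z| ≤ 2 * Real.sqrt s * (z ^ 2 / (8 * s) + 1) := by
      rw [show 2 * Real.sqrt s * (z ^ 2 / (8 * s) + 1) = (z ^ 2 + 8 * s) * Real.sqrt s / (4 * s) by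
        field_simp; ring]
      rw [le_div_iff₀ (by positivity)]
      calc |z| * (4 * s) = Real.sqrt s * (4 * Real.sqrt s * |z|) := by nlinarith
        _ ≤ Real.sqrt s * (z ^ 2 + 8 * s) := by
            exact mul_le_mul_of_nonneg_left h3' hsq.le
        _ = (z ^ 2 + 8 * s) * Real.sqrt s := by ring
    have h4 := mul_le_mul_of_nonneg_left h1 (by positivity : (0:ℝ) ≤ 2 * Real.sqrt s)
    calc |z| ≤ 2 * Real.sqrt s * (z ^ 2 / (8 * s) + 1) := h3
      _ ≤ 2 * Real.sqrt s * Real.exp (z ^ 2 / (8 * s)) := h4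
      _ = Real.exp (z ^ 2 / (8 * s)) * (2 * Real.sqrt s) := by ring
  have habs : |dPhi z s| = (|z| * E) * E / (2 * s * A) := by
    unfold dPhi Phi
    rw [exp_quarter_eq, ← hEdef, ← hAdef, abs_mul, abs_neg, abs_div,
      abs_of_pos (by positivity : (0:ℝ) < 2 * s),
      abs_of_nonneg (by positivity : (0:ℝ) ≤ 1 / A * (E * E))]
    ring
  rw [habs]
  calc (|z| * E) * E / (2 * s * A) ≤ (2 * Real.sqrt s) * E / (2 * s * A) := by gcongr
    _ ≤ (2 * Real.sqrt s) * E / (2 * s * (2 * Real.sqrt s)) := by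
        gcongr
    _ = E / (2 * s) := by field_simp
    _ ≤ s⁻¹ * E := by
        rw [inv_mul_eq_div, div_le_div_iff₀ (by positivity) hs]
        nlinarith

lemma abs_d2Phi_le {s : ℝ} (hs : 0 < s) (z : ℝ) :
    |d2Phi z s| ≤ 2 * (s * Real.sqrt s)⁻¹ * Real.exp (-z ^ 2 / (8 * s)) := by
  have hsq : (0:ℝ) < Real.sqrt s := Real.sqrt_pos.2 hs
  have hss : Real.sqrt s ^ 2 = s := Real.sq_sqrt hs.le
  have hE : (0:ℝ) < Real.exp (-z ^ 2 / (8 * s)) := Real.exp_pos _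
  set E := Real.exp (-z ^ 2 / (8 * s)) with hEdef
  have hA : (0:ℝ) < Real.sqrt (4 * π * s) := Real.sqrt_pos.2 (by positivity)
  set A := Real.sqrt (4 * π * s) with hAdef
  have hA2 : 2 * Real.sqrt s ≤ A := sqrt_4pis_ge hs
  have key : z ^ 2 * E ≤ 8 * s := by
    have h1 : z ^ 2 / (8 * s) + 1 ≤ Real.exp (z ^ 2 / (8 * s)) := Real.add_one_le_exp _
    have h2 : E = (Real.exp (z ^ 2 / (8 * s)))⁻¹ := by
      rw [hEdef, ← Real.exp_neg]; ring_nf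
    rw [h2, mul_inv_le_iff₀' (Real.exp_pos _)]
    have h4 := mul_le_mul_of_nonneg_left h1 (by positivity : (0:ℝ) ≤ 8 * s)
    calc z ^ 2 ≤ 8 * s * (z ^ 2 / (8 * s) + 1) := by field_simp; nlinarith
      _ ≤ 8 * s * Real.exp (z ^ 2 / (8 * s)) := h4
      _ = Real.exp (z ^ 2 / (8 * s)) * (8 * s) := by ring
  have hE1 : E ≤ 1 := by
    rw [hEdef, Real.exp_le_one_iff, neg_div]
    exact neg_nonpos.2 (by positivity)
  have habs : |d2Phi z s| ≤ ((z ^ 2 / (4 * s ^ 2) + 1 / (2 * s)) * E) * E / A := by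
    unfold d2Phi Phi
    rw [exp_quarter_eq, ← hEdef, ← hAdef, abs_mul,
      abs_of_nonneg (by positivity : (0:ℝ) ≤ 1 / A * (E * E))]
    have h5 : |z ^ 2 / (4 * s ^ 2) - 1 / (2 * s)| ≤ z ^ 2 / (4 * s ^ 2) + 1 / (2 * s) := by
      refine (abs_sub _ _).trans ?_
      rw [abs_of_nonneg (by positivity), abs_of_nonneg (by positivity)]
    calc |z ^ 2 / (4 * s ^ 2) - 1 / (2 * s)| * (1 / A * (E * E))
        ≤ (z ^ 2 / (4 * s ^ 2) + 1 / (2 * s)) * (1 / A * (E * E)) := by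
          exact mul_le_mul_of_nonneg_right h5 (by positivity)
      _ = ((z ^ 2 / (4 * s ^ 2) + 1 / (2 * s)) * E) * E / A := by ring
  refine habs.trans ?_
  have h6 : (z ^ 2 / (4 * s ^ 2) + 1 / (2 * s)) * E ≤ 5 / (2 * s) := by
    have h7 : z ^ 2 * E / (4 * s ^ 2) ≤ 2 / s := by
      rw [div_le_div_iff₀ (by positivity) hs]
      nlinarith
    have h8 : E / (2 * s) ≤ 1 / (2 * s) := by
      gcongr
    calc (z ^ 2 / (4 * s ^ 2) + 1 / (2 * s)) * E = z ^ 2 * E / (4 * s ^ 2) + E / (2 * s) := by ring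
      _ ≤ 2 / s + 1 / (2 * s) := by linarith
      _ = 5 / (2 * s) := by field_simp; ring
  calc ((z ^ 2 / (4 * s ^ 2) + 1 / (2 * s)) * E) * E / A
      ≤ (5 / (2 * s)) * E / A := by gcongr
    _ ≤ (5 / (2 * s)) * E / (2 * Real.sqrt s) := by
        gcongr
    _ ≤ 2 * (s * Real.sqrt s)⁻¹ * E := by
        rw [div_le_iff₀ (by positivity)]
        have hX : (0:ℝ) < s * Real.sqrt s := by positivity
        rw [show 2 * (s * Real.sqrt s)⁻¹ * E * (2 * Real.sqrt s) = 4 * E * (Real.sqrt s * (s * Real.sqrt s)⁻¹) by ring]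
        rw [show Real.sqrt s * (s * Real.sqrt s)⁻¹ = s⁻¹ by
          field_simp]
        rw [show (5 : ℝ) / (2 * s) * E = (5 / 2) * E * s⁻¹ by ring]
        have : (0:ℝ) < s⁻¹ := by positivity
        nlinarith

-- Gaussian integral lemmas
lemma integrable_gauss_base {s c : ℝ} (hs : 0 < s) (hc : 0 < c) :
    Integrable (fun z : ℝ => Real.exp (-z ^ 2 / (c * s))) := by
  have h : (fun z : ℝ => Real.exp (-z ^ 2 / (c * s))) = fun z : ℝ => Real.exp (-((c * s)⁻¹) * z ^ 2) := by
    funext z; congr 1; field_simp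
  rw [h]
  exact integrable_exp_neg_mul_sq (by positivity)

lemma integral_gauss_base_le {s : ℝ} (hs : 0 < s) :
    ∫ z : ℝ, Real.exp (-z ^ 2 / (8 * s)) ≤ 6 * Real.sqrt s := by
  have h : (fun z : ℝ => Real.exp (-z ^ 2 / (8 * s))) = fun z : ℝ => Real.exp (-((8 * s)⁻¹) * z ^ 2) := by
    funext z; congr 1; field_simp
  rw [h, integral_gaussian]
  have h2 : π / (8 * s)⁻¹ = 8 * π * s := by field_simp
  rw [h2]
  have h3 : Real.sqrt (8 * π * s) = Real.sqrt (8 * π) * Real.sqrt s := by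
    rw [← Real.sqrt_mul (by positivity)]
  rw [h3]
  have h4 : Real.sqrt (8 * π) ≤ 6 := by
    rw [show (6:ℝ) = Real.sqrt 36 by rw [show (36:ℝ) = 6^2 by norm_num, Real.sqrt_sq (by norm_num : (0:ℝ) ≤ 6)]]
    exact Real.sqrt_le_sqrt (by nlinarith [Real.pi_le_four])
  have := Real.sqrt_nonneg s
  nlinarith

lemma integrable_gauss_sub {s : ℝ} (hs : 0 < s) (y : ℝ) :
    Integrable (fun ξ : ℝ => Real.exp (-(y - ξ) ^ 2 / (8 * s))) :=
  (integrable_gauss_base hs (by norm_num : (0:ℝ) < 8)).comp_sub_left y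

lemma integrable_gauss_add {s : ℝ} (hs : 0 < s) (y : ℝ) :
    Integrable (fun ξ : ℝ => Real.exp (-(y + ξ) ^ 2 / (8 * s))) := by
  have h := (integrable_gauss_base hs (by norm_num : (0:ℝ) < 8)).comp_add_right y
  simpa [add_comm] using h

lemma setint_gauss_sub_le {s : ℝ} (hs : 0 < s) (y : ℝ) :
    ∫ ξ in Ioi (0:ℝ), Real.exp (-(y - ξ) ^ 2 / (8 * s)) ≤ 6 * Real.sqrt s := by
  refine le_trans (setIntegral_le_integral (integrable_gauss_sub hs y)
    (Filter.Eventually.of_forall fun ξ => (Real.exp_pos _).le)) ?_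
  rw [integral_sub_left_eq_self (fun z : ℝ => Real.exp (-z ^ 2 / (8 * s))) volume y]
  exact integral_gauss_base_le hs

lemma setint_gauss_add_le {s : ℝ} (hs : 0 < s) (y : ℝ) :
    ∫ ξ in Ioi (0:ℝ), Real.exp (-(y + ξ) ^ 2 / (8 * s)) ≤ 6 * Real.sqrt s := by
  refine le_trans (setIntegral_le_integral (integrable_gauss_add hs y)
    (Filter.Eventually.of_forall fun ξ => (Real.exp_pos _).le)) ?_
  have h : ∫ ξ : ℝ, Real.exp (-(y + ξ) ^ 2 / (8 * s)) = ∫ z : ℝ, Real.exp (-z ^ 2 / (8 * s)) := by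
    rw [show (fun ξ : ℝ => Real.exp (-(y + ξ) ^ 2 / (8 * s))) = fun ξ : ℝ =>
      (fun z : ℝ => Real.exp (-z ^ 2 / (8 * s))) (ξ + y) from funext fun ξ => by rw [add_comm]]
    exact integral_add_right_eq_self (μ := volume) (fun z : ℝ => Real.exp (-z ^ 2 / (8 * s))) y
  rw [h]
  exact integral_gauss_base_le hs


noncomputable def dG (y ξ s : ℝ) : ℝ := dPhi (y - ξ) s - dPhi (y + ξ) s

lemma hasDerivAt_Gker {s : ℝ} (hs : 0 < s) (ξ y : ℝ) :
    HasDerivAt (fun y => Gker y ξ s) (dG y ξ s) y := by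
  have h1 : HasDerivAt (fun y : ℝ => Phi (y - ξ) s) (dPhi (y - ξ) s) y := by
    have := (hasDerivAt_Phi hs (y - ξ)).comp y ((hasDerivAt_id y).sub_const ξ)
    exact this.congr_deriv (mul_one _)
  have h2 : HasDerivAt (fun y : ℝ => Phi (y + ξ) s) (dPhi (y + ξ) s) y := by
    have := (hasDerivAt_Phi hs (y + ξ)).comp y ((hasDerivAt_id y).add_const ξ)
    exact this.congr_deriv (mul_one _)
  exact h1.sub h2

lemma continuous_Phi_sub {s : ℝ} (y : ℝ) : Continuous fun ξ : ℝ => Phi (y - ξ) s := by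
  unfold Phi; fun_prop

lemma continuous_Phi_add {s : ℝ} (y : ℝ) : Continuous fun ξ : ℝ => Phi (y + ξ) s := by
  unfold Phi; fun_prop

lemma continuous_Gker {s : ℝ} (y : ℝ) : Continuous fun ξ : ℝ => Gker y ξ s := by
  unfold Gker Phi; fun_prop

lemma continuous_dG {s : ℝ} (y : ℝ) : Continuous fun ξ : ℝ => dG y ξ s := by
  unfold dG dPhi Phi; fun_prop

lemma Phi_le {s : ℝ} (hs : 0 < s) (z : ℝ) :
    Phi z s ≤ (Real.sqrt s)⁻¹ * Real.exp (-z ^ 2 / (8 * s)) := by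
  have hsq : (0:ℝ) < Real.sqrt s := Real.sqrt_pos.2 hs
  have hA : (0:ℝ) < Real.sqrt (4 * π * s) := Real.sqrt_pos.2 (by positivity)
  have hA2 : 2 * Real.sqrt s ≤ Real.sqrt (4 * π * s) := sqrt_4pis_ge hs
  have hEE : Real.exp (-z ^ 2 / (4 * s)) ≤ Real.exp (-z ^ 2 / (8 * s)) := by
    apply Real.exp_le_exp.2
    rw [neg_div, neg_div, neg_le_neg_iff]
    apply div_le_div_of_nonneg_left (by positivity) (by positivity) (by linarith)
  unfold Phi
  calc 1 / Real.sqrt (4 * π * s) * Real.exp (-z ^ 2 / (4 * s))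
      ≤ 1 / (2 * Real.sqrt s) * Real.exp (-z ^ 2 / (8 * s)) := by
        apply mul_le_mul (by
          apply one_div_le_one_div_of_le (by positivity) hA2) hEE (Real.exp_pos _).le (by positivity)
    _ ≤ (Real.sqrt s)⁻¹ * Real.exp (-z ^ 2 / (8 * s)) := by
        apply mul_le_mul_of_nonneg_right _ (Real.exp_pos _).le
        rw [one_div]
        apply inv_anti₀ hsq
        nlinarith

lemma abs_Gker_le {s : ℝ} (hs : 0 < s) (y ξ : ℝ) :
    |Gker y ξ s| ≤ (Real.sqrt s)⁻¹ *
      (Real.exp (-(y - ξ) ^ 2 / (8 * s)) + Real.exp (-(y + ξ) ^ 2 / (8 * s))) := by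
  unfold Gker
  refine (abs_sub _ _).trans ?_
  rw [abs_of_nonneg (Phi_nonneg _ _), abs_of_nonneg (Phi_nonneg _ _)]
  have h1 := Phi_le hs (y - ξ)
  have h2 := Phi_le hs (y + ξ)
  rw [mul_add]
  exact add_le_add h1 h2

lemma abs_dG_le {s : ℝ} (hs : 0 < s) (y ξ : ℝ) :
    |dG y ξ s| ≤ s⁻¹ *
      (Real.exp (-(y - ξ) ^ 2 / (8 * s)) + Real.exp (-(y + ξ) ^ 2 / (8 * s))) := by
  unfold dG
  refine (abs_sub _ _).trans ?_
  rw [mul_add]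
  exact add_le_add (abs_dPhi_le hs _) (abs_dPhi_le hs _)

lemma exp_shift_bound {s : ℝ} (hs : 0 < s) {y₀ y : ℝ} (ξ : ℝ) (hy : |y - y₀| ≤ 1)
    {z : ℝ} (hz : z = y - ξ ∨ z = y + ξ) :
    Real.exp (-z ^ 2 / (8 * s)) ≤
      Real.exp ((|y₀| + 1) ^ 2 / (8 * s)) * Real.exp (-ξ ^ 2 / (16 * s)) := by
  rw [← Real.exp_add]
  apply Real.exp_le_exp.2
  have hyy : |y| ≤ |y₀| + 1 := by
    calc |y| = |y₀ + (y - y₀)| := by ring_nf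
      _ ≤ |y₀| + |y - y₀| := abs_add_le _ _
      _ ≤ |y₀| + 1 := by linarith
  have hy2 : y ^ 2 ≤ (|y₀| + 1) ^ 2 := by
    have h := sq_abs y
    nlinarith [abs_nonneg y, abs_nonneg y₀]
  have hz2 : ξ ^ 2 / 2 - y ^ 2 ≤ z ^ 2 := by
    rcases hz with h | h <;> subst h
    · nlinarith [sq_nonneg (2 * y - ξ)]
    · nlinarith [sq_nonneg (2 * y + ξ)]
  rw [div_add_div _ _ (by positivity : (8:ℝ) * s ≠ 0) (by positivity : (16:ℝ) * s ≠ 0),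
    div_le_div_iff₀ (by positivity) (by positivity)]
  have hkey : ξ ^ 2 / 2 - z ^ 2 ≤ (|y₀| + 1) ^ 2 := by nlinarith
  nlinarith [mul_le_mul_of_nonneg_left hkey (by positivity : (0:ℝ) ≤ 128 * s ^ 2)]

section Main

variable {tstar : ℝ} {f : ℝ × ℝ → ℝ} {M : ℝ}

lemma slice_meas (hcont : ContinuousOn f (Set.Icc 0 tstar ×ˢ Set.Ici 0))
    {τ : ℝ} (hτ : τ ∈ Set.Icc (0:ℝ) tstar) :
    AEStronglyMeasurable (fun ξ => f (τ, ξ)) (volume.restrict (Ioi 0)) := by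
  have h1 : ContinuousOn (fun ξ => f (τ, ξ)) (Ici 0) := by
    have hc : Continuous fun ξ : ℝ => (τ, ξ) := by fun_prop
    exact hcont.comp hc.continuousOn (fun ξ hξ => ⟨hτ, hξ⟩)
  exact (h1.aestronglyMeasurable measurableSet_Ici).mono_measure
    (Measure.restrict_mono Ioi_subset_Ici_self le_rfl)

lemma inner_integrable (hcont : ContinuousOn f (Set.Icc 0 tstar ×ˢ Set.Ici 0))
    (hbd : ∀ p ∈ Set.Icc (0:ℝ) tstar ×ˢ Set.Ici (0:ℝ), |f p| ≤ M)
    {τ s : ℝ} (hτ : τ ∈ Set.Icc (0:ℝ) tstar) (hs : 0 < s) (y : ℝ) :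
    IntegrableOn (fun ξ => f (τ, ξ) * Gker y ξ s) (Ioi 0) volume := by
  have hM : 0 ≤ M := le_trans (abs_nonneg _) (hbd (τ, 0) ⟨hτ, mem_Ici.2 (le_refl 0)⟩)
  refine Integrable.mono' (g := fun ξ => M * ((Real.sqrt s)⁻¹ *
      (Real.exp (-(y - ξ) ^ 2 / (8 * s)) + Real.exp (-(y + ξ) ^ 2 / (8 * s))))) ?_ ?_ ?_
  · exact ((((integrable_gauss_sub hs y).add (integrable_gauss_add hs y)).const_mul
      _).const_mul M).integrableOn
  · exact (slice_meas hcont hτ).mul (continuous_Gker y).aestronglyMeasurable.restrict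
  · filter_upwards [ae_restrict_mem measurableSet_Ioi] with ξ hξ
    rw [Real.norm_eq_abs, abs_mul]
    exact mul_le_mul (hbd (τ, ξ) ⟨hτ, mem_Ici.2 (le_of_lt hξ)⟩) (abs_Gker_le hs y ξ)
      (abs_nonneg _) hM

lemma inner_integrable' (hcont : ContinuousOn f (Set.Icc 0 tstar ×ˢ Set.Ici 0))
    (hbd : ∀ p ∈ Set.Icc (0:ℝ) tstar ×ˢ Set.Ici (0:ℝ), |f p| ≤ M)
    {τ s : ℝ} (hτ : τ ∈ Set.Icc (0:ℝ) tstar) (hs : 0 < s) (y : ℝ) :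
    IntegrableOn (fun ξ => f (τ, ξ) * dG y ξ s) (Ioi 0) volume := by
  have hM : 0 ≤ M := le_trans (abs_nonneg _) (hbd (τ, 0) ⟨hτ, mem_Ici.2 (le_refl 0)⟩)
  refine Integrable.mono' (g := fun ξ => M * (s⁻¹ *
      (Real.exp (-(y - ξ) ^ 2 / (8 * s)) + Real.exp (-(y + ξ) ^ 2 / (8 * s))))) ?_ ?_ ?_
  · exact ((((integrable_gauss_sub hs y).add (integrable_gauss_add hs y)).const_mul
      _).const_mul M).integrableOn
  · exact (slice_meas hcont hτ).mul (continuous_dG y).aestronglyMeasurable.restrict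
  · filter_upwards [ae_restrict_mem measurableSet_Ioi] with ξ hξ
    rw [Real.norm_eq_abs, abs_mul]
    exact mul_le_mul (hbd (τ, ξ) ⟨hτ, mem_Ici.2 (le_of_lt hξ)⟩) (abs_dG_le hs y ξ)
      (abs_nonneg _) hM

lemma inner_hasDerivAt (hcont : ContinuousOn f (Set.Icc 0 tstar ×ˢ Set.Ici 0))
    (hbd : ∀ p ∈ Set.Icc (0:ℝ) tstar ×ˢ Set.Ici (0:ℝ), |f p| ≤ M)
    {τ s : ℝ} (hτ : τ ∈ Set.Icc (0:ℝ) tstar) (hs : 0 < s) (y₀ : ℝ) :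
    HasDerivAt (fun y => ∫ ξ in Ioi (0:ℝ), f (τ, ξ) * Gker y ξ s)
      (∫ ξ in Ioi (0:ℝ), f (τ, ξ) * dG y₀ ξ s) y₀ := by
  have hM : 0 ≤ M := le_trans (abs_nonneg _) (hbd (τ, 0) ⟨hτ, mem_Ici.2 (le_refl 0)⟩)
  have h := hasDerivAt_integral_of_dominated_loc_of_deriv_le (μ := volume.restrict (Ioi 0))
    (F := fun y ξ => f (τ, ξ) * Gker y ξ s) (F' := fun y ξ => f (τ, ξ) * dG y ξ s)
    (x₀ := y₀)
    (bound := fun ξ => M * (s⁻¹ * (2 * Real.exp ((|y₀| + 1) ^ 2 / (8 * s)) *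
      Real.exp (-ξ ^ 2 / (16 * s)))))
    (s := Metric.ball y₀ 1) (Metric.ball_mem_nhds y₀ one_pos)
    (Filter.Eventually.of_forall fun y =>
      (slice_meas hcont hτ).mul (continuous_Gker y).aestronglyMeasurable.restrict)
    (inner_integrable hcont hbd hτ hs y₀)
    ((slice_meas hcont hτ).mul (continuous_dG y₀).aestronglyMeasurable.restrict)
    ?_ ?_ ?_
  · exact h.2
  · -- bound
    filter_upwards [ae_restrict_mem measurableSet_Ioi] with ξ hξ y hy
    rw [Real.norm_eq_abs, abs_mul]
    have h1 : |dG y ξ s| ≤ s⁻¹ * (2 * Real.exp ((|y₀| + 1) ^ 2 / (8 * s)) *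
        Real.exp (-ξ ^ 2 / (16 * s))) := by
      have hyy : |y - y₀| ≤ 1 := le_of_lt (by simpa [Real.dist_eq] using Metric.mem_ball.1 hy)
      refine (abs_dG_le hs y ξ).trans ?_
      have e1 := exp_shift_bound hs ξ hyy (Or.inl rfl)
      have e2 := exp_shift_bound hs ξ hyy (Or.inr rfl)
      have hpos : (0:ℝ) < s⁻¹ := by positivity
      nlinarith [Real.exp_pos (-(y - ξ) ^ 2 / (8 * s)), Real.exp_pos (-(y + ξ) ^ 2 / (8 * s))]
    exact mul_le_mul (hbd (τ, ξ) ⟨hτ, mem_Ici.2 (le_of_lt hξ)⟩) h1 (abs_nonneg _) hM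
  · -- bound integrable
    apply Integrable.integrableOn
    have hbase : Integrable (fun ξ : ℝ => Real.exp (-ξ ^ 2 / (16 * s))) :=
      integrable_gauss_base hs (by norm_num)
    exact ((hbase.const_mul _).const_mul _).const_mul M
  · -- differentiability
    filter_upwards with ξ y _
    exact (hasDerivAt_Gker hs ξ y).const_mul (f (τ, ξ))


lemma I_bound (hcont : ContinuousOn f (Set.Icc 0 tstar ×ˢ Set.Ici 0))
    (hbd : ∀ p ∈ Set.Icc (0:ℝ) tstar ×ˢ Set.Ici (0:ℝ), |f p| ≤ M)
    {τ s : ℝ} (hτ : τ ∈ Set.Icc (0:ℝ) tstar) (hs : 0 < s) (y : ℝ) :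
    |∫ ξ in Ioi (0:ℝ), f (τ, ξ) * Gker y ξ s| ≤ 12 * M := by
  have hM : 0 ≤ M := le_trans (abs_nonneg _) (hbd (τ, 0) ⟨hτ, mem_Ici.2 (le_refl 0)⟩)
  have hsq : (0:ℝ) < Real.sqrt s := Real.sqrt_pos.2 hs
  rw [← Real.norm_eq_abs]
  refine le_trans (norm_integral_le_of_norm_le (g := fun ξ => M * ((Real.sqrt s)⁻¹ *
      (Real.exp (-(y - ξ) ^ 2 / (8 * s)) + Real.exp (-(y + ξ) ^ 2 / (8 * s)))))
      (((((integrable_gauss_sub hs y).add (integrable_gauss_add hs y)).const_mul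
        _).const_mul M).integrableOn) ?_) ?_
  · filter_upwards [ae_restrict_mem measurableSet_Ioi] with ξ hξ
    rw [Real.norm_eq_abs, abs_mul]
    exact mul_le_mul (hbd (τ, ξ) ⟨hτ, mem_Ici.2 (le_of_lt hξ)⟩) (abs_Gker_le hs y ξ) (abs_nonneg _) hM
  · have heq : ∫ ξ in Ioi (0:ℝ), M * ((Real.sqrt s)⁻¹ *
        (Real.exp (-(y - ξ) ^ 2 / (8 * s)) + Real.exp (-(y + ξ) ^ 2 / (8 * s))))
        = M * (Real.sqrt s)⁻¹ * ((∫ ξ in Ioi (0:ℝ), Real.exp (-(y - ξ) ^ 2 / (8 * s)))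
          + ∫ ξ in Ioi (0:ℝ), Real.exp (-(y + ξ) ^ 2 / (8 * s))) := by
      rw [← integral_add ((integrable_gauss_sub hs y).integrableOn)
        ((integrable_gauss_add hs y).integrableOn), ← MeasureTheory.integral_const_mul]
      congr 1; funext ξ; ring
    rw [heq]
    have h1 := setint_gauss_sub_le hs y
    have h2 := setint_gauss_add_le hs y
    calc M * (Real.sqrt s)⁻¹ * ((∫ ξ in Ioi (0:ℝ), Real.exp (-(y - ξ) ^ 2 / (8 * s)))
          + ∫ ξ in Ioi (0:ℝ), Real.exp (-(y + ξ) ^ 2 / (8 * s)))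
        ≤ M * (Real.sqrt s)⁻¹ * (6 * Real.sqrt s + 6 * Real.sqrt s) := by
          apply mul_le_mul_of_nonneg_left (add_le_add h1 h2) (by positivity)
      _ = 12 * M * (Real.sqrt s * (Real.sqrt s)⁻¹) := by ring
      _ = 12 * M := by rw [mul_inv_cancel₀ (ne_of_gt hsq), mul_one]

lemma J_bound (hcont : ContinuousOn f (Set.Icc 0 tstar ×ˢ Set.Ici 0))
    (hbd : ∀ p ∈ Set.Icc (0:ℝ) tstar ×ˢ Set.Ici (0:ℝ), |f p| ≤ M)
    {τ s : ℝ} (hτ : τ ∈ Set.Icc (0:ℝ) tstar) (hs : 0 < s) (y : ℝ) :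
    |∫ ξ in Ioi (0:ℝ), f (τ, ξ) * dG y ξ s| ≤ 12 * M / Real.sqrt s := by
  have hM : 0 ≤ M := le_trans (abs_nonneg _) (hbd (τ, 0) ⟨hτ, mem_Ici.2 (le_refl 0)⟩)
  have hsq : (0:ℝ) < Real.sqrt s := Real.sqrt_pos.2 hs
  rw [← Real.norm_eq_abs]
  refine le_trans (norm_integral_le_of_norm_le (g := fun ξ => M * (s⁻¹ *
      (Real.exp (-(y - ξ) ^ 2 / (8 * s)) + Real.exp (-(y + ξ) ^ 2 / (8 * s)))))
      (((((integrable_gauss_sub hs y).add (integrable_gauss_add hs y)).const_mul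
        _).const_mul M).integrableOn) ?_) ?_
  · filter_upwards [ae_restrict_mem measurableSet_Ioi] with ξ hξ
    rw [Real.norm_eq_abs, abs_mul]
    exact mul_le_mul (hbd (τ, ξ) ⟨hτ, mem_Ici.2 (le_of_lt hξ)⟩) (abs_dG_le hs y ξ) (abs_nonneg _) hM
  · have heq : ∫ ξ in Ioi (0:ℝ), M * (s⁻¹ *
        (Real.exp (-(y - ξ) ^ 2 / (8 * s)) + Real.exp (-(y + ξ) ^ 2 / (8 * s))))
        = M * s⁻¹ * ((∫ ξ in Ioi (0:ℝ), Real.exp (-(y - ξ) ^ 2 / (8 * s)))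
          + ∫ ξ in Ioi (0:ℝ), Real.exp (-(y + ξ) ^ 2 / (8 * s))) := by
      rw [← integral_add ((integrable_gauss_sub hs y).integrableOn)
        ((integrable_gauss_add hs y).integrableOn), ← MeasureTheory.integral_const_mul]
      congr 1; funext ξ; ring
    rw [heq]
    have h1 := setint_gauss_sub_le hs y
    have h2 := setint_gauss_add_le hs y
    have hss : Real.sqrt s * Real.sqrt s = s := Real.mul_self_sqrt hs.le
    calc M * s⁻¹ * ((∫ ξ in Ioi (0:ℝ), Real.exp (-(y - ξ) ^ 2 / (8 * s)))
          + ∫ ξ in Ioi (0:ℝ), Real.exp (-(y + ξ) ^ 2 / (8 * s)))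
        ≤ M * s⁻¹ * (6 * Real.sqrt s + 6 * Real.sqrt s) := by
          apply mul_le_mul_of_nonneg_left (add_le_add h1 h2) (by positivity)
      _ = 12 * M / Real.sqrt s := by
          rw [eq_div_iff (ne_of_gt hsq)]
          field_simp
          nlinarith [hM]


lemma continuousOn_Phi_comp {g : ℝ × ℝ → ℝ} (hg : Continuous g) {t : ℝ} {S : Set (ℝ × ℝ)}
    (hS : ∀ p ∈ S, p.1 < t) : ContinuousOn (fun p => Phi (g p) (t - p.1)) S := by
  unfold Phi
  apply ContinuousOn.mul
  · apply ContinuousOn.div continuousOn_const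
    · exact Continuous.continuousOn (by fun_prop)
    · intro p hp
      have h1 : 0 < t - p.1 := sub_pos.2 (hS p hp)
      have h2 : 0 < 4 * π * (t - p.1) := by positivity
      exact ne_of_gt (Real.sqrt_pos.2 h2)
  · apply ContinuousOn.rexp
    apply ContinuousOn.div
    · exact Continuous.continuousOn (by fun_prop)
    · exact Continuous.continuousOn (by fun_prop)
    · intro p hp
      have h1 : 0 < t - p.1 := sub_pos.2 (hS p hp)
      positivity

lemma continuousOn_dPhi_comp {g : ℝ × ℝ → ℝ} (hg : Continuous g) {t : ℝ} {S : Set (ℝ × ℝ)}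
    (hS : ∀ p ∈ S, p.1 < t) : ContinuousOn (fun p => dPhi (g p) (t - p.1)) S := by
  unfold dPhi
  apply ContinuousOn.mul
  · apply ContinuousOn.neg
    apply ContinuousOn.div
    · exact hg.continuousOn
    · exact Continuous.continuousOn (by fun_prop)
    · intro p hp
      have h1 : 0 < t - p.1 := sub_pos.2 (hS p hp)
      positivity
  · exact continuousOn_Phi_comp hg hS

lemma outer_meas_G (hcont : ContinuousOn f (Set.Icc 0 tstar ×ˢ Set.Ici 0))
    {t : ℝ} (ht : 0 < t) (htt : t ≤ tstar) (y : ℝ) :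
    AEStronglyMeasurable (fun τ => ∫ ξ in Ioi (0:ℝ), f (τ, ξ) * Gker y ξ (t - τ))
      (volume.restrict (Ioo 0 t)) := by
  have hsub : (Ioo 0 t ×ˢ Ioi 0 : Set (ℝ × ℝ)) ⊆ Icc 0 tstar ×ˢ Ici 0 :=
    prod_mono (fun τ hτ => ⟨hτ.1.le, hτ.2.le.trans htt⟩) Ioi_subset_Ici_self
  have hS : ∀ p ∈ (Ioo 0 t ×ˢ Ioi 0 : Set (ℝ × ℝ)), p.1 < t := fun p hp => hp.1.2
  have hH : ContinuousOn (fun p : ℝ × ℝ => f p * Gker y p.2 (t - p.1)) (Ioo 0 t ×ˢ Ioi 0) := by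
    refine (hcont.mono hsub).mul ?_
    unfold Gker
    exact (continuousOn_Phi_comp (by fun_prop) hS).sub (continuousOn_Phi_comp (by fun_prop) hS)
  have hAESM : AEStronglyMeasurable (fun p : ℝ × ℝ => f p * Gker y p.2 (t - p.1))
      ((volume.restrict (Ioo 0 t)).prod (volume.restrict (Ioi 0))) := by
    rw [Measure.prod_restrict, ← Measure.volume_eq_prod]
    exact hH.aestronglyMeasurable (measurableSet_Ioo.prod measurableSet_Ioi)
  exact hAESM.integral_prod_right'

lemma outer_meas_dG (hcont : ContinuousOn f (Set.Icc 0 tstar ×ˢ Set.Ici 0))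
    {t : ℝ} (ht : 0 < t) (htt : t ≤ tstar) (y : ℝ) :
    AEStronglyMeasurable (fun τ => ∫ ξ in Ioi (0:ℝ), f (τ, ξ) * dG y ξ (t - τ))
      (volume.restrict (Ioo 0 t)) := by
  have hsub : (Ioo 0 t ×ˢ Ioi 0 : Set (ℝ × ℝ)) ⊆ Icc 0 tstar ×ˢ Ici 0 :=
    prod_mono (fun τ hτ => ⟨hτ.1.le, hτ.2.le.trans htt⟩) Ioi_subset_Ici_self
  have hS : ∀ p ∈ (Ioo 0 t ×ˢ Ioi 0 : Set (ℝ × ℝ)), p.1 < t := fun p hp => hp.1.2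
  have hH : ContinuousOn (fun p : ℝ × ℝ => f p * dG y p.2 (t - p.1)) (Ioo 0 t ×ˢ Ioi 0) := by
    refine (hcont.mono hsub).mul ?_
    unfold dG
    exact (continuousOn_dPhi_comp (by fun_prop) hS).sub (continuousOn_dPhi_comp (by fun_prop) hS)
  have hAESM : AEStronglyMeasurable (fun p : ℝ × ℝ => f p * dG y p.2 (t - p.1))
      ((volume.restrict (Ioo 0 t)).prod (volume.restrict (Ioi 0))) := by
    rw [Measure.prod_restrict, ← Measure.volume_eq_prod]
    exact hH.aestronglyMeasurable (measurableSet_Ioo.prod measurableSet_Ioi)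
  exact hAESM.integral_prod_right'


lemma integrableOn_Ioc_tsub_rpow {t a b r : ℝ} (hab : a ≤ b) (hr : -1 < r) :
    IntegrableOn (fun τ => (t - τ) ^ r) (Ioc a b) volume := by
  have h1 : IntervalIntegrable (fun x : ℝ => x ^ r) volume (t - a) (t - b) :=
    intervalIntegral.intervalIntegrable_rpow' hr
  have h2 := h1.comp_sub_left t
  simp only [sub_sub_cancel] at h2
  exact (intervalIntegrable_iff_integrableOn_Ioc_of_le hab).1 h2

lemma integral_Ioc_tsub_rpow {t a b r : ℝ} (hab : a ≤ b) (hr : -1 < r) :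
    ∫ τ in Ioc a b, (t - τ) ^ r = ((t - a) ^ (r + 1) - (t - b) ^ (r + 1)) / (r + 1) := by
  rw [← intervalIntegral.integral_of_le hab,
    show (fun τ => (t - τ) ^ r) = fun τ => (fun x : ℝ => x ^ r) (t - τ) from rfl,
    intervalIntegral.integral_comp_sub_left (fun x : ℝ => x ^ r) t,
    integral_rpow (Or.inl hr)]

lemma outer_hasDerivAt (hcont : ContinuousOn f (Set.Icc 0 tstar ×ˢ Set.Ici 0))
    (hbd : ∀ p ∈ Set.Icc (0:ℝ) tstar ×ˢ Set.Ici (0:ℝ), |f p| ≤ M)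
    {t : ℝ} (ht : 0 < t) (htt : t ≤ tstar) (y₀ : ℝ) :
    HasDerivAt (fun y => ∫ τ in Ioc (0:ℝ) t, ∫ ξ in Ioi (0:ℝ), f (τ, ξ) * Gker y ξ (t - τ))
      (∫ τ in Ioc (0:ℝ) t, ∫ ξ in Ioi (0:ℝ), f (τ, ξ) * dG y₀ ξ (t - τ)) y₀ ∧
    IntegrableOn (fun τ => ∫ ξ in Ioi (0:ℝ), f (τ, ξ) * dG y₀ ξ (t - τ)) (Ioc 0 t) volume := by
  have hM : 0 ≤ M := le_trans (abs_nonneg _)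
    (hbd (0, 0) ⟨⟨le_refl 0, ht.le.trans htt⟩, mem_Ici.2 (le_refl 0)⟩)
  have hres : volume.restrict (Ioc (0:ℝ) t) = volume.restrict (Ioo 0 t) :=
    (Measure.restrict_congr_set Ioo_ae_eq_Ioc).symm
  simp only [IntegrableOn]
  rw [hres]
  have H := hasDerivAt_integral_of_dominated_loc_of_deriv_le (μ := volume.restrict (Ioo 0 t))
    (F := fun y τ => ∫ ξ in Ioi (0:ℝ), f (τ, ξ) * Gker y ξ (t - τ))
    (F' := fun y τ => ∫ ξ in Ioi (0:ℝ), f (τ, ξ) * dG y ξ (t - τ))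
    (bound := fun τ => 12 * M * (t - τ) ^ (-(1:ℝ)/2)) (x₀ := y₀) (s := Metric.ball y₀ 1) (Metric.ball_mem_nhds y₀ one_pos)
    (Filter.Eventually.of_forall fun y => outer_meas_G hcont ht htt y)
    ?_ (outer_meas_dG hcont ht htt y₀) ?_ ?_ ?_
  · exact ⟨H.2, H.1⟩
  · -- Integrable (F y₀)
    refine Integrable.mono' (g := fun _ => 12 * M) ?_ (outer_meas_G hcont ht htt y₀) ?_
    · rw [← IntegrableOn]
      exact integrableOn_const measure_Ioo_lt_top.ne
    · filter_upwards [ae_restrict_mem measurableSet_Ioo] with τ hτ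
      rw [Real.norm_eq_abs]
      exact I_bound hcont hbd ⟨hτ.1.le, hτ.2.le.trans htt⟩ (sub_pos.2 hτ.2) y₀
  · -- bound
    filter_upwards [ae_restrict_mem measurableSet_Ioo] with τ hτ y hy
    have hs : 0 < t - τ := sub_pos.2 hτ.2
    rw [Real.norm_eq_abs]
    refine (J_bound hcont hbd ⟨hτ.1.le, hτ.2.le.trans htt⟩ hs y).trans (le_of_eq ?_)
    rw [show (-(1:ℝ)/2) = -(1/2 : ℝ) by norm_num, Real.rpow_neg hs.le,
      ← Real.sqrt_eq_rpow, div_eq_mul_inv]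
  · -- bound integrable
    exact ((integrableOn_Ioc_tsub_rpow ht.le (by norm_num : (-1:ℝ) < -(1:ℝ)/2)).mono_set
      Ioo_subset_Ioc_self).const_mul (12 * M)
  · -- differentiability
    filter_upwards [ae_restrict_mem measurableSet_Ioo] with τ hτ y hy
    exact inner_hasDerivAt hcont hbd ⟨hτ.1.le, hτ.2.le.trans htt⟩ (sub_pos.2 hτ.2) y


end Main

noncomputable def ddE (x y ξ s : ℝ) : ℝ :=
  Real.exp (-(max (min x y - ξ) (max (ξ - max x y) 0)) ^ 2 / (8 * s))

lemma ddE_nonneg (x y ξ s : ℝ) : 0 ≤ ddE x y ξ s := (Real.exp_pos _).le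

lemma ddE_le_one {s : ℝ} (hs : 0 < s) (x y ξ : ℝ) : ddE x y ξ s ≤ 1 := by
  unfold ddE
  rw [Real.exp_le_one_iff, neg_div]
  exact neg_nonpos.2 (by positivity)

lemma continuous_ddE (x y s : ℝ) : Continuous (fun ξ => ddE x y ξ s) := by
  unfold ddE; fun_prop

lemma dPhi_diff_sub {s : ℝ} (hs : 0 < s) (x y ξ : ℝ) :
    |dPhi (y - ξ) s - dPhi (x - ξ) s| ≤ 2 * (s * Real.sqrt s)⁻¹ * ddE x y ξ s * |y - x| := by
  set dd := max (min x y - ξ) (max (ξ - max x y) 0) with hdd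
  have hdd0 : 0 ≤ dd := le_trans (le_max_right _ _) (le_max_right _ _)
  have key := Convex.norm_image_sub_le_of_norm_hasDerivWithin_le (𝕜 := ℝ)
    (f := fun η => dPhi (η - ξ) s) (f' := fun η => d2Phi (η - ξ) s)
    (s := uIcc x y) (C := 2 * (s * Real.sqrt s)⁻¹ * ddE x y ξ s)
    (fun η hη => by
      have := (hasDerivAt_dPhi hs (η - ξ)).comp η ((hasDerivAt_id η).sub_const ξ)
      exact this.hasDerivWithinAt.congr_deriv (mul_one _))
    (fun η hη => ?_) (convex_uIcc x y) left_mem_uIcc right_mem_uIcc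
  · simpa [Real.norm_eq_abs] using key
  · rw [Real.norm_eq_abs]
    refine (abs_d2Phi_le hs (η - ξ)).trans ?_
    rw [mul_le_mul_iff_right₀ (by positivity : (0:ℝ) < 2 * (s * Real.sqrt s)⁻¹)]
    unfold ddE
    apply Real.exp_le_exp.2
    rw [uIcc] at hη
    have h1 : dd ≤ |η - ξ| := by
      apply max_le
      · exact le_trans (by linarith [hη.1]) (le_abs_self _)
      · apply max_le _ (abs_nonneg _)
        rw [abs_sub_comm]
        exact le_trans (by linarith [hη.2]) (le_abs_self _)
    have h2 : dd ^ 2 ≤ (η - ξ) ^ 2 := by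
      rw [← sq_abs (η - ξ)]
      exact pow_le_pow_left₀ hdd0 h1 2
    rw [neg_div, neg_div, neg_le_neg_iff]
    gcongr

lemma dPhi_diff_add {s : ℝ} (hs : 0 < s) {x y : ℝ} (hx : 0 ≤ x) (hy : 0 ≤ y)
    {ξ : ℝ} (hξ : 0 ≤ ξ) :
    |dPhi (y + ξ) s - dPhi (x + ξ) s| ≤
      2 * (s * Real.sqrt s)⁻¹ * Real.exp (-ξ ^ 2 / (8 * s)) * |y - x| := by
  have key := Convex.norm_image_sub_le_of_norm_hasDerivWithin_le (𝕜 := ℝ)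
    (f := fun η => dPhi (η + ξ) s) (f' := fun η => d2Phi (η + ξ) s)
    (s := uIcc x y) (C := 2 * (s * Real.sqrt s)⁻¹ * Real.exp (-ξ ^ 2 / (8 * s)))
    (fun η hη => by
      have := (hasDerivAt_dPhi hs (η + ξ)).comp η ((hasDerivAt_id η).add_const ξ)
      exact this.hasDerivWithinAt.congr_deriv (mul_one _))
    (fun η hη => ?_) (convex_uIcc x y) left_mem_uIcc right_mem_uIcc
  · simpa [Real.norm_eq_abs] using key
  · rw [Real.norm_eq_abs]
    refine (abs_d2Phi_le hs (η + ξ)).trans ?_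
    rw [mul_le_mul_iff_right₀ (by positivity : (0:ℝ) < 2 * (s * Real.sqrt s)⁻¹)]
    apply Real.exp_le_exp.2
    rw [uIcc] at hη
    have hmn : 0 ≤ min x y := le_min hx hy
    have h1 : ξ ≤ η + ξ := by linarith [hη.1]
    have h2 : ξ ^ 2 ≤ (η + ξ) ^ 2 := by nlinarith
    rw [neg_div, neg_div, neg_le_neg_iff]
    gcongr

lemma ddE_ge_right {x y ξ : ℝ} (hξ : max x y ≤ ξ) {s : ℝ} (hs : 0 < s) :
    ddE x y ξ s ≤ Real.exp (-(max x y - ξ) ^ 2 / (8 * s)) := by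
  unfold ddE
  apply Real.exp_le_exp.2
  rw [neg_div, neg_div, neg_le_neg_iff]
  have h2 : (max x y - ξ) ^ 2 ≤ (max (min x y - ξ) (max (ξ - max x y) 0)) ^ 2 := by
    rw [show (max x y - ξ) ^ 2 = (ξ - max x y) ^ 2 by ring]
    exact pow_le_pow_left₀ (by linarith) (le_trans (le_max_left _ _) (le_max_right _ _)) 2
  gcongr

lemma ddE_ge_left {x y ξ : ℝ} (hξ : ξ ≤ min x y) {s : ℝ} (hs : 0 < s) :
    ddE x y ξ s ≤ Real.exp (-(min x y - ξ) ^ 2 / (8 * s)) := by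
  unfold ddE
  apply Real.exp_le_exp.2
  rw [neg_div, neg_div, neg_le_neg_iff]
  have h2 : (min x y - ξ) ^ 2 ≤ (max (min x y - ξ) (max (ξ - max x y) 0)) ^ 2 := by
    exact pow_le_pow_left₀ (by linarith) (le_max_left _ _) 2
  gcongr

lemma integrableOn_ddE {s : ℝ} (hs : 0 < s) {x y : ℝ} (hx : 0 ≤ x) (hy : 0 ≤ y) :
    IntegrableOn (fun ξ => ddE x y ξ s) (Ioi 0) volume := by
  have hmx : (0:ℝ) ≤ max x y := le_max_of_le_left hx
  have hsplit : Ioc (0:ℝ) (max x y) ∪ Ioi (max x y) = Ioi 0 := Ioc_union_Ioi_eq_Ioi hmx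
  rw [← hsplit]
  apply IntegrableOn.union
  · exact (continuous_ddE x y s).integrableOn_Ioc
  · refine Integrable.mono' (g := fun ξ => Real.exp (-(max x y - ξ) ^ 2 / (8 * s)))
      ((integrable_gauss_sub hs (max x y)).integrableOn)
      (continuous_ddE x y s).aestronglyMeasurable.restrict ?_
    filter_upwards [ae_restrict_mem measurableSet_Ioi] with ξ hξ
    rw [Real.norm_eq_abs, abs_of_nonneg (ddE_nonneg _ _ _ _)]
    exact ddE_ge_right (le_of_lt hξ) hs

lemma integral_ddE_le {s : ℝ} (hs : 0 < s) {x y : ℝ} (hx : 0 ≤ x) (hy : 0 ≤ y) :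
    ∫ ξ in Ioi (0:ℝ), ddE x y ξ s ≤ |y - x| + 12 * Real.sqrt s := by
  have hmn : (0:ℝ) ≤ min x y := le_min hx hy
  have hmne : min x y ≤ max x y := min_le_max
  have hmx : (0:ℝ) ≤ max x y := hmn.trans hmne
  have hu1 : Ioc (0:ℝ) (min x y) ∪ Ioc (min x y) (max x y) = Ioc 0 (max x y) :=
    Ioc_union_Ioc_eq_Ioc hmn hmne
  have hu2 : Ioc (0:ℝ) (max x y) ∪ Ioi (max x y) = Ioi 0 := Ioc_union_Ioi_eq_Ioi hmx
  have hint := integrableOn_ddE hs hx hy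
  have hi1 : IntegrableOn (fun ξ => ddE x y ξ s) (Ioc 0 (min x y)) volume :=
    hint.mono_set (fun ξ hξ => mem_Ioi.2 hξ.1)
  have hi2 : IntegrableOn (fun ξ => ddE x y ξ s) (Ioc (min x y) (max x y)) volume :=
    hint.mono_set (fun ξ hξ => mem_Ioi.2 (lt_of_le_of_lt hmn hξ.1))
  have hi3 : IntegrableOn (fun ξ => ddE x y ξ s) (Ioi (max x y)) volume :=
    hint.mono_set (fun ξ hξ => mem_Ioi.2 (lt_of_le_of_lt hmx hξ))
  have hsplit2 : ∫ ξ in Ioi (0:ℝ), ddE x y ξ s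
      = (∫ ξ in Ioc (0:ℝ) (min x y), ddE x y ξ s)
        + (∫ ξ in Ioc (min x y) (max x y), ddE x y ξ s)
        + ∫ ξ in Ioi (max x y), ddE x y ξ s := by
    rw [← hu2, setIntegral_union (Ioc_disjoint_Ioi le_rfl) measurableSet_Ioi
      (hi1.union hi2 |>.mono_set (by rw [hu1])) hi3, ← hu1,
      setIntegral_union (Ioc_disjoint_Ioc_of_le le_rfl) measurableSet_Ioc hi1 hi2]
  rw [hsplit2]
  have hb1 : ∫ ξ in Ioc (0:ℝ) (min x y), ddE x y ξ s ≤ 6 * Real.sqrt s := by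
    refine le_trans (setIntegral_mono_on hi1 ((integrable_gauss_sub hs (min x y)).integrableOn)
      measurableSet_Ioc (fun ξ hξ => ddE_ge_left hξ.2 hs)) ?_
    refine le_trans (setIntegral_le_integral (integrable_gauss_sub hs (min x y))
      (Filter.Eventually.of_forall fun ξ => (Real.exp_pos _).le)) ?_
    rw [integral_sub_left_eq_self (fun z : ℝ => Real.exp (-z ^ 2 / (8 * s))) volume (min x y)]
    exact integral_gauss_base_le hs
  have hb2 : ∫ ξ in Ioc (min x y) (max x y), ddE x y ξ s ≤ |y - x| := by
    refine le_trans (setIntegral_mono_on hi2 (integrableOn_const measure_Ioc_lt_top.ne)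
      measurableSet_Ioc (fun ξ hξ => ddE_le_one hs x y ξ)) ?_
    rw [setIntegral_const, smul_eq_mul, mul_one, measureReal_def, Real.volume_Ioc,
      ENNReal.toReal_ofReal (by linarith), max_sub_min_eq_abs, abs_sub_comm]
  have hb3 : ∫ ξ in Ioi (max x y), ddE x y ξ s ≤ 6 * Real.sqrt s := by
    refine le_trans (setIntegral_mono_on hi3 ((integrable_gauss_sub hs (max x y)).integrableOn)
      measurableSet_Ioi (fun ξ hξ => ddE_ge_right (le_of_lt hξ) hs)) ?_
    refine le_trans (setIntegral_le_integral (integrable_gauss_sub hs (max x y))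
      (Filter.Eventually.of_forall fun ξ => (Real.exp_pos _).le)) ?_
    rw [integral_sub_left_eq_self (fun z : ℝ => Real.exp (-z ^ 2 / (8 * s))) volume (max x y)]
    exact integral_gauss_base_le hs
  linarith

lemma dPhi_zero (z : ℝ) : dPhi z 0 = 0 := by
  unfold dPhi
  rw [mul_zero, div_zero, neg_zero, zero_mul]

lemma dG_zero (y ξ : ℝ) : dG y ξ 0 = 0 := by
  unfold dG; rw [dPhi_zero, dPhi_zero, sub_self]

lemma integrable_gauss0 {s : ℝ} (hs : 0 < s) :
    Integrable (fun ξ : ℝ => Real.exp (-ξ ^ 2 / (8 * s))) := by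
  have h := integrable_gauss_sub hs 0
  simpa using h

lemma setint_gauss0_le {s : ℝ} (hs : 0 < s) :
    ∫ ξ in Ioi (0:ℝ), Real.exp (-ξ ^ 2 / (8 * s)) ≤ 6 * Real.sqrt s := by
  have h := setint_gauss_sub_le hs 0
  simpa using h

section Main2

variable {tstar : ℝ} {f : ℝ × ℝ → ℝ} {M : ℝ}

lemma Jdiff_bound1 (hcont : ContinuousOn f (Set.Icc 0 tstar ×ˢ Set.Ici 0))
    (hbd : ∀ p ∈ Set.Icc (0:ℝ) tstar ×ˢ Set.Ici (0:ℝ), |f p| ≤ M)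
    {τ s : ℝ} (hτ : τ ∈ Set.Icc (0:ℝ) tstar) (hs : 0 < s) (x y : ℝ) :
    |(∫ ξ in Ioi (0:ℝ), f (τ, ξ) * dG y ξ s) - ∫ ξ in Ioi (0:ℝ), f (τ, ξ) * dG x ξ s|
      ≤ 24 * M / Real.sqrt s := by
  have h1 := J_bound hcont hbd hτ hs y
  have h2 := J_bound hcont hbd hτ hs x
  have h3 := abs_sub (∫ ξ in Ioi (0:ℝ), f (τ, ξ) * dG y ξ s)
    (∫ ξ in Ioi (0:ℝ), f (τ, ξ) * dG x ξ s)
  have : 12 * M / Real.sqrt s + 12 * M / Real.sqrt s = 24 * M / Real.sqrt s := by ring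
  linarith

lemma Jdiff_bound2 (hcont : ContinuousOn f (Set.Icc 0 tstar ×ˢ Set.Ici 0))
    (hbd : ∀ p ∈ Set.Icc (0:ℝ) tstar ×ˢ Set.Ici (0:ℝ), |f p| ≤ M)
    {τ s : ℝ} (hτ : τ ∈ Set.Icc (0:ℝ) tstar) (hs : 0 < s)
    {x y : ℝ} (hx : 0 ≤ x) (hy : 0 ≤ y) :
    |(∫ ξ in Ioi (0:ℝ), f (τ, ξ) * dG y ξ s) - ∫ ξ in Ioi (0:ℝ), f (τ, ξ) * dG x ξ s|
      ≤ M * (2 * (s * Real.sqrt s)⁻¹) * |y - x| * (|y - x| + 18 * Real.sqrt s) := by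
  have hM : 0 ≤ M := le_trans (abs_nonneg _) (hbd (τ, 0) ⟨hτ, mem_Ici.2 (le_refl 0)⟩)
  have hsq : (0:ℝ) < Real.sqrt s := Real.sqrt_pos.2 hs
  rw [← integral_sub (inner_integrable' hcont hbd hτ hs y) (inner_integrable' hcont hbd hτ hs x),
    ← Real.norm_eq_abs]
  have hgint : Integrable (fun ξ => M * (2 * (s * Real.sqrt s)⁻¹) * |y - x| *
      (ddE x y ξ s + Real.exp (-ξ ^ 2 / (8 * s)))) (volume.restrict (Ioi 0)) := by
    exact ((integrableOn_ddE hs hx hy).add (integrable_gauss0 hs).integrableOn).const_mul _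
  refine le_trans (norm_integral_le_of_norm_le hgint ?_) ?_
  · filter_upwards [ae_restrict_mem measurableSet_Ioi] with ξ hξ
    rw [Real.norm_eq_abs, show f (τ, ξ) * dG y ξ s - f (τ, ξ) * dG x ξ s
      = f (τ, ξ) * (dG y ξ s - dG x ξ s) by ring, abs_mul]
    have hsplit : dG y ξ s - dG x ξ s
        = (dPhi (y - ξ) s - dPhi (x - ξ) s) - (dPhi (y + ξ) s - dPhi (x + ξ) s) := by
      unfold dG; ring
    have hΔ : |dG y ξ s - dG x ξ s| ≤ 2 * (s * Real.sqrt s)⁻¹ * |y - x| *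
        (ddE x y ξ s + Real.exp (-ξ ^ 2 / (8 * s))) := by
      rw [hsplit]
      refine le_trans (abs_sub _ _) ?_
      have h1 := dPhi_diff_sub hs x y ξ
      have h2 := dPhi_diff_add hs hx hy (le_of_lt hξ)
      calc |dPhi (y - ξ) s - dPhi (x - ξ) s| + |dPhi (y + ξ) s - dPhi (x + ξ) s|
          ≤ 2 * (s * Real.sqrt s)⁻¹ * ddE x y ξ s * |y - x|
            + 2 * (s * Real.sqrt s)⁻¹ * Real.exp (-ξ ^ 2 / (8 * s)) * |y - x| :=
            add_le_add h1 h2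
        _ = 2 * (s * Real.sqrt s)⁻¹ * |y - x| *
            (ddE x y ξ s + Real.exp (-ξ ^ 2 / (8 * s))) := by ring
    calc |f (τ, ξ)| * |dG y ξ s - dG x ξ s|
        ≤ M * (2 * (s * Real.sqrt s)⁻¹ * |y - x| *
          (ddE x y ξ s + Real.exp (-ξ ^ 2 / (8 * s)))) := by
          apply mul_le_mul (hbd (τ, ξ) ⟨hτ, mem_Ici.2 (le_of_lt hξ)⟩) hΔ (abs_nonneg _) hM
      _ = M * (2 * (s * Real.sqrt s)⁻¹) * |y - x| *
          (ddE x y ξ s + Real.exp (-ξ ^ 2 / (8 * s))) := by ring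
  · have heq : ∫ ξ in Ioi (0:ℝ), M * (2 * (s * Real.sqrt s)⁻¹) * |y - x| *
        (ddE x y ξ s + Real.exp (-ξ ^ 2 / (8 * s)))
        = M * (2 * (s * Real.sqrt s)⁻¹) * |y - x| *
          ((∫ ξ in Ioi (0:ℝ), ddE x y ξ s) + ∫ ξ in Ioi (0:ℝ), Real.exp (-ξ ^ 2 / (8 * s))) := by
      rw [← integral_add (integrableOn_ddE hs hx hy) (integrable_gauss0 hs).integrableOn,
        ← MeasureTheory.integral_const_mul]
    rw [heq]
    have h1 := integral_ddE_le hs hx hy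
    have h2 := setint_gauss0_le hs
    calc M * (2 * (s * Real.sqrt s)⁻¹) * |y - x| *
          ((∫ ξ in Ioi (0:ℝ), ddE x y ξ s) + ∫ ξ in Ioi (0:ℝ), Real.exp (-ξ ^ 2 / (8 * s)))
        ≤ M * (2 * (s * Real.sqrt s)⁻¹) * |y - x| *
          ((|y - x| + 12 * Real.sqrt s) + 6 * Real.sqrt s) := by
          apply mul_le_mul_of_nonneg_left (add_le_add h1 h2) (by positivity)
      _ = M * (2 * (s * Real.sqrt s)⁻¹) * |y - x| * (|y - x| + 18 * Real.sqrt s) := by ring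

end Main2

lemma est2 {M h s β : ℝ} (hM : 0 ≤ M) (hh : 0 < h) (hs : 0 < s) (hhs : h ^ 2 ≤ s)
    (hβ : β ∈ Set.Ioo (0:ℝ) 1) :
    M * (2 * (s * Real.sqrt s)⁻¹) * h * (h + 18 * Real.sqrt s)
      ≤ 38 * M * h ^ β * s ^ (-(1 + β) / 2) := by
  have hsq : (0:ℝ) < Real.sqrt s := Real.sqrt_pos.2 hs
  have hhle : h ≤ Real.sqrt s := by
    rw [show h = Real.sqrt (h ^ 2) from (Real.sqrt_sq hh.le).symm]
    exact Real.sqrt_le_sqrt hhs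
  have step1 : M * (2 * (s * Real.sqrt s)⁻¹) * h * (h + 18 * Real.sqrt s)
      ≤ M * (2 * (s * Real.sqrt s)⁻¹) * h * (19 * Real.sqrt s) := by
    apply mul_le_mul_of_nonneg_left (by linarith) (by positivity)
  have step2 : M * (2 * (s * Real.sqrt s)⁻¹) * h * (19 * Real.sqrt s) = 38 * M * (h / s) := by
    have hss : Real.sqrt s ≠ 0 := ne_of_gt hsq
    field_simp
    ring
  have e1 : h = h ^ β * h ^ (1 - β) := by
    rw [← Real.rpow_add hh]; norm_num
  have e2 : h ^ (1 - β) ≤ s ^ ((1 - β) / 2) := by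
    calc h ^ (1 - β) ≤ (Real.sqrt s) ^ (1 - β) :=
          Real.rpow_le_rpow hh.le hhle (by linarith [hβ.2])
      _ = s ^ ((1 - β) / 2) := by
          rw [Real.sqrt_eq_rpow, ← Real.rpow_mul hs.le]
          congr 1
          ring
  have e3 : s ^ ((1 - β) / 2) / s = s ^ (-(1 + β) / 2) := by
    have h1 : s ^ ((1 - β) / 2) / s = s ^ ((1 - β) / 2) * s ^ (-1 : ℝ) := by
      rw [Real.rpow_neg_one]; ring
    rw [h1, ← Real.rpow_add hs]
    congr 1; ring
  have step3 : h / s ≤ h ^ β * s ^ (-(1 + β) / 2) := by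
    calc h / s = h ^ β * h ^ (1 - β) / s := by rw [← e1]
      _ ≤ h ^ β * s ^ ((1 - β) / 2) / s := by gcongr
      _ = h ^ β * (s ^ ((1 - β) / 2) / s) := by ring
      _ = h ^ β * s ^ (-(1 + β) / 2) := by rw [e3]
  calc M * (2 * (s * Real.sqrt s)⁻¹) * h * (h + 18 * Real.sqrt s)
      ≤ 38 * M * (h / s) := by rw [← step2]; exact step1
    _ ≤ 38 * M * (h ^ β * s ^ (-(1 + β) / 2)) := by
        apply mul_le_mul_of_nonneg_left step3 (by positivity)
    _ = 38 * M * h ^ β * s ^ (-(1 + β) / 2) := by ring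

section Main3

variable {tstar : ℝ} {f : ℝ × ℝ → ℝ} {M : ℝ}

lemma master (hcont : ContinuousOn f (Set.Icc 0 tstar ×ˢ Set.Ici 0))
    (hbd : ∀ p ∈ Set.Icc (0:ℝ) tstar ×ˢ Set.Ici (0:ℝ), |f p| ≤ M)
    {t x y β : ℝ} (ht : 0 < t) (htt : t ≤ tstar) (hx : 0 ≤ x) (hy : 0 ≤ y)
    (hβ : β ∈ Set.Ioo (0:ℝ) 1) (hh : 0 < |y - x|) :
    |(∫ τ in Ioc (0:ℝ) t, ∫ ξ in Ioi (0:ℝ), f (τ, ξ) * dG y ξ (t - τ))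
        - ∫ τ in Ioc (0:ℝ) t, ∫ ξ in Ioi (0:ℝ), f (τ, ξ) * dG x ξ (t - τ)|
      ≤ 124 * M * |y - x| ^ β * t ^ ((1 - β) / 2) / (1 - β) := by
  obtain ⟨hβ0, hβ1⟩ := hβ
  have hM : 0 ≤ M := le_trans (abs_nonneg _)
    (hbd (0, 0) ⟨⟨le_refl 0, ht.le.trans htt⟩, mem_Ici.2 (le_refl 0)⟩)
  set h := |y - x| with hhdef
  set c := max (t - h ^ 2) 0 with hcdef
  have hc0 : 0 ≤ c := le_max_right _ _
  have hct : c ≤ t := max_le (by nlinarith [sq_nonneg h]) ht.le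
  set J := fun (τ z : ℝ) => ∫ ξ in Ioi (0:ℝ), f (τ, ξ) * dG z ξ (t - τ) with hJdef
  have hIy : IntegrableOn (fun τ => J τ y) (Ioc 0 t) volume :=
    (outer_hasDerivAt hcont hbd ht htt y).2
  have hIx : IntegrableOn (fun τ => J τ x) (Ioc 0 t) volume :=
    (outer_hasDerivAt hcont hbd ht htt x).2
  have hI : IntegrableOn (fun τ => J τ y - J τ x) (Ioc 0 t) volume := hIy.sub hIx
  rw [← integral_sub hIy hIx]
  have hsub1 : Ioc (0:ℝ) c ⊆ Ioc 0 t := Ioc_subset_Ioc_right hct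
  have hsub2 : Ioc c t ⊆ Ioc (0:ℝ) t := Ioc_subset_Ioc_left hc0
  have hsplit : ∫ τ in Ioc (0:ℝ) t, (J τ y - J τ x)
      = (∫ τ in Ioc (0:ℝ) c, (J τ y - J τ x)) + ∫ τ in Ioc c t, (J τ y - J τ x) := by
    rw [← Ioc_union_Ioc_eq_Ioc hc0 hct,
      setIntegral_union (Ioc_disjoint_Ioc_of_le le_rfl) measurableSet_Ioc
        (hI.mono_set hsub1) (hI.mono_set hsub2)]
  rw [hsplit]
  -- Piece 1
  have hr1 : (-1:ℝ) < -(1 + β) / 2 := by linarith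
  have hP1 : |∫ τ in Ioc (0:ℝ) c, (J τ y - J τ x)|
      ≤ (38 * M * h ^ β) * (t ^ ((1 - β) / 2) * (2 / (1 - β))) := by
    rw [← Real.norm_eq_abs]
    refine le_trans (norm_integral_le_of_norm_le
      (g := fun τ => (38 * M * h ^ β) * (t - τ) ^ (-(1 + β) / 2))
      ((integrableOn_Ioc_tsub_rpow hc0 hr1).const_mul _) ?_) ?_
    · filter_upwards [ae_restrict_mem measurableSet_Ioc] with τ hτ
      have hth : 0 < t - h ^ 2 := by
        by_contra hcon
        push_neg at hcon
        have : c = 0 := max_eq_right (by linarith)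
        linarith [hτ.1, hτ.2, this ▸ hτ.2]
      have hcval : c = t - h ^ 2 := max_eq_left hth.le
      have hs : 0 < t - τ := by
        have : τ ≤ c := hτ.2
        have hh2 : 0 < h ^ 2 := by positivity
        rw [hcval] at this
        linarith
      have hhs : h ^ 2 ≤ t - τ := by
        have : τ ≤ c := hτ.2
        rw [hcval] at this
        linarith
      rw [Real.norm_eq_abs]
      refine le_trans (Jdiff_bound2 hcont hbd ⟨hτ.1.le, (hτ.2.trans hct).trans htt⟩ hs hx hy) ?_
      have := est2 hM hh hs hhs ⟨hβ0, hβ1⟩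
      calc M * (2 * ((t - τ) * Real.sqrt (t - τ))⁻¹) * |y - x| * (|y - x| + 18 * Real.sqrt (t - τ))
          ≤ 38 * M * h ^ β * (t - τ) ^ (-(1 + β) / 2) := this
        _ = (38 * M * h ^ β) * (t - τ) ^ (-(1 + β) / 2) := by ring
    · rw [MeasureTheory.integral_const_mul, integral_Ioc_tsub_rpow hc0 hr1]
      have hexp : -(1 + β) / 2 + 1 = (1 - β) / 2 := by ring
      rw [hexp, sub_zero]
      have h1 : (0:ℝ) ≤ (t - c) ^ ((1 - β) / 2) := Real.rpow_nonneg (by linarith) _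
      have h2 : (t ^ ((1 - β) / 2) - (t - c) ^ ((1 - β) / 2)) / ((1 - β) / 2)
          ≤ t ^ ((1 - β) / 2) * (2 / (1 - β)) := by
        rw [div_le_iff₀ (by linarith : (0:ℝ) < (1 - β) / 2)]
        have h3 : t ^ ((1 - β) / 2) * (2 / (1 - β)) * ((1 - β) / 2) = t ^ ((1 - β) / 2) := by
          rw [mul_assoc, show (2 / (1 - β)) * ((1 - β) / 2) = 1 by
            rw [div_mul_div_comm, div_eq_one_iff_eq (by nlinarith : (1 - β) * 2 ≠ 0)]; ring,
            mul_one]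
        rw [h3]
        linarith
      exact mul_le_mul_of_nonneg_left h2 (by positivity)
  -- Piece 2
  have hr2 : (-1:ℝ) < -(1:ℝ) / 2 := by norm_num
  have hP2 : |∫ τ in Ioc c t, (J τ y - J τ x)|
      ≤ (24 * M) * ((t - c) ^ ((1:ℝ) / 2) * 2) := by
    rw [← Real.norm_eq_abs]
    refine le_trans (norm_integral_le_of_norm_le
      (g := fun τ => (24 * M) * (t - τ) ^ (-(1:ℝ) / 2))
      ((integrableOn_Ioc_tsub_rpow hct hr2).const_mul _) ?_) ?_
    · filter_upwards [ae_restrict_mem measurableSet_Ioc] with τ hτ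
      rw [Real.norm_eq_abs]
      rcases eq_or_lt_of_le hτ.2 with heq | hlt
      · -- τ = t
        have hzero : J τ y - J τ x = 0 := by
          rw [hJdef]
          simp only [heq, sub_self, dG_zero, mul_zero, integral_zero, sub_self]
        rw [hzero, abs_zero, heq, sub_self, Real.zero_rpow (by norm_num : (-(1:ℝ)/2) ≠ 0),
          mul_zero]
        
      · have hs : 0 < t - τ := sub_pos.2 hlt
        refine le_trans (Jdiff_bound1 hcont hbd
          ⟨(hc0.trans hτ.1.le), hτ.2.trans htt⟩ hs x y) (le_of_eq ?_)
        rw [show (-(1:ℝ)/2) = -((1:ℝ)/2) by norm_num, Real.rpow_neg hs.le,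
          ← Real.sqrt_eq_rpow, div_eq_mul_inv]
    · rw [MeasureTheory.integral_const_mul, integral_Ioc_tsub_rpow hct hr2]
      have hexp : -(1:ℝ) / 2 + 1 = (1:ℝ) / 2 := by ring
      rw [hexp, sub_self, Real.zero_rpow (by norm_num : ((1:ℝ)/2) ≠ 0)]
      rw [show ((t - c) ^ ((1:ℝ) / 2) - 0) / ((1:ℝ) / 2) = (t - c) ^ ((1:ℝ) / 2) * 2 by ring]
  -- combine
  have htc : (t - c) ^ ((1:ℝ) / 2) ≤ h ^ β * t ^ ((1 - β) / 2) := by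
    have htc0 : 0 < t - c := by
      rcases le_total (t - h ^ 2) 0 with hcase | hcase
      · rw [hcdef, max_eq_right hcase]; linarith
      · rw [hcdef, max_eq_left hcase]
        have : 0 < h ^ 2 := by positivity
        linarith
    have htc1 : t - c ≤ h ^ 2 := by
      rcases le_total (t - h ^ 2) 0 with hcase | hcase
      · rw [hcdef, max_eq_right hcase]; nlinarith
      · rw [hcdef, max_eq_left hcase]; linarith
    have htc2 : t - c ≤ t := by linarith
    have e1 : (t - c) ^ ((1:ℝ) / 2) = (t - c) ^ (β / 2) * (t - c) ^ ((1 - β) / 2) := by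
      rw [← Real.rpow_add htc0]; congr 1; ring
    rw [e1]
    have e2 : (t - c) ^ (β / 2) ≤ h ^ β := by
      have : (t - c) ^ (β / 2) ≤ (h ^ 2) ^ (β / 2) :=
        Real.rpow_le_rpow htc0.le htc1 (by linarith)
      refine this.trans (le_of_eq ?_)
      rw [← Real.rpow_natCast h 2, ← Real.rpow_mul (abs_nonneg _)]
      congr 1
      push_cast
      ring
    have e3 : (t - c) ^ ((1 - β) / 2) ≤ t ^ ((1 - β) / 2) :=
      Real.rpow_le_rpow htc0.le htc2 (by linarith)
    exact mul_le_mul e2 e3 (Real.rpow_nonneg htc0.le _) (Real.rpow_nonneg (abs_nonneg _) _)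
  have hfinal := (abs_add_le _ _).trans (add_le_add hP1 hP2)
  refine hfinal.trans ?_
  have hb : 1 ≤ 1 / (1 - β) := by
    rw [le_div_iff₀ (by linarith)]
    linarith
  have hP2' : (24 * M) * ((t - c) ^ ((1:ℝ) / 2) * 2) ≤ 48 * M * (h ^ β * t ^ ((1 - β) / 2)) := by
    calc (24 * M) * ((t - c) ^ ((1:ℝ) / 2) * 2) = 48 * M * (t - c) ^ ((1:ℝ) / 2) := by ring
      _ ≤ 48 * M * (h ^ β * t ^ ((1 - β) / 2)) := by
          apply mul_le_mul_of_nonneg_left htc (by positivity)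
  have hX : (0:ℝ) ≤ M * h ^ β * t ^ ((1 - β) / 2) := by positivity
  calc (38 * M * h ^ β) * (t ^ ((1 - β) / 2) * (2 / (1 - β)))
        + (24 * M) * ((t - c) ^ ((1:ℝ) / 2) * 2)
      ≤ (38 * M * h ^ β) * (t ^ ((1 - β) / 2) * (2 / (1 - β)))
        + 48 * M * (h ^ β * t ^ ((1 - β) / 2)) := by linarith
    _ = 76 * (M * h ^ β * t ^ ((1 - β) / 2)) / (1 - β)
        + 48 * (M * h ^ β * t ^ ((1 - β) / 2)) := by ring
    _ ≤ 76 * (M * h ^ β * t ^ ((1 - β) / 2)) / (1 - β)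
        + 48 * (M * h ^ β * t ^ ((1 - β) / 2)) / (1 - β) := by
        have : 48 * (M * h ^ β * t ^ ((1 - β) / 2))
            ≤ 48 * (M * h ^ β * t ^ ((1 - β) / 2)) / (1 - β) := by
          rw [le_div_iff₀ (by linarith : (0:ℝ) < 1 - β)]
          nlinarith [hX]
        linarith
    _ = 124 * M * h ^ β * t ^ ((1 - β) / 2) / (1 - β) := by ring

end Main3

theorem stmt14 (tstar β : ℝ) (htstar : 0 < tstar) (hβ : β ∈ Set.Ioo (0 : ℝ) 1) :
    ∃ C > (0 : ℝ), ∀ (f : ℝ × ℝ → ℝ) (M : ℝ),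
      ContinuousOn f (Set.Icc 0 tstar ×ˢ Set.Ici 0) →
      (∀ p ∈ Set.Icc (0:ℝ) tstar ×ˢ Set.Ici (0:ℝ), |f p| ≤ M) →
      ∀ t x y : ℝ, 0 < t → t ≤ tstar → 0 ≤ x → 0 ≤ y →
        |deriv (fun y' => ∫ τ in Set.Ioc (0 : ℝ) t,
              ∫ ξ in Set.Ioi (0 : ℝ), f (τ, ξ) * Gker y' ξ (t - τ)) y -
            deriv (fun y' => ∫ τ in Set.Ioc (0 : ℝ) t,
              ∫ ξ in Set.Ioi (0 : ℝ), f (τ, ξ) * Gker y' ξ (t - τ)) x|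
          ≤ C * M / (1 - β) * |x - y| ^ β := by
  obtain ⟨hβ0, hβ1⟩ := hβ
  have hmax : (0:ℝ) < max 1 tstar := lt_of_lt_of_le one_pos (le_max_left _ _)
  refine ⟨124 * max 1 tstar, by positivity, ?_⟩
  intro f M hcont hbd t x y ht htt hx hy
  have hM : 0 ≤ M := le_trans (abs_nonneg _)
    (hbd (0, 0) ⟨⟨le_refl 0, htstar.le⟩, mem_Ici.2 (le_refl 0)⟩)
  have hDy := (outer_hasDerivAt hcont hbd ht htt y).1
  have hDx := (outer_hasDerivAt hcont hbd ht htt x).1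
  rw [hDy.deriv, hDx.deriv]
  by_cases hxy : y = x
  · rw [hxy]
    simp [sub_self, abs_zero, Real.zero_rpow (ne_of_gt hβ0)]
  · have hh : 0 < |y - x| := abs_pos.2 (sub_ne_zero.2 hxy)
    refine (master hcont hbd ht htt hx hy ⟨hβ0, hβ1⟩ hh).trans ?_
    rw [show |x - y| = |y - x| from abs_sub_comm x y]
    have htb : t ^ ((1 - β) / 2) ≤ max 1 tstar := by
      rcases le_total t 1 with hcase | hcase
      · exact le_trans (Real.rpow_le_one ht.le hcase (by linarith)) (le_max_left _ _)
      · calc t ^ ((1 - β) / 2) ≤ t ^ (1:ℝ) :=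
            Real.rpow_le_rpow_of_exponent_le hcase (by linarith)
          _ = t := Real.rpow_one t
          _ ≤ tstar := htt
          _ ≤ max 1 tstar := le_max_right _ _
    have hK : 0 ≤ 124 * M * |y - x| ^ β / (1 - β) :=
      div_nonneg (mul_nonneg (mul_nonneg (by norm_num) hM)
        (Real.rpow_nonneg (abs_nonneg _) β)) (by linarith)
    calc 124 * M * |y - x| ^ β * t ^ ((1 - β) / 2) / (1 - β)
        = (124 * M * |y - x| ^ β / (1 - β)) * t ^ ((1 - β) / 2) := by ring
      _ ≤ (124 * M * |y - x| ^ β / (1 - β)) * max 1 tstar :=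
          mul_le_mul_of_nonneg_left htb hK
      _ = 124 * max 1 tstar * M / (1 - β) * |y - x| ^ β := by ring
end
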